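/- arXiv:2002.11172 — 6 statements merged into one kernel-verified Lean document; each statement's English description precedes it below -/
import Mathlib

section
/- Fix d, n ∈ ℕ with d, n ≥ 1, w* ∈ ℝ^d, σ > 0, and w₀ ∈ ℝ^d. Suppose an estimator has the form Alg(S; w₀) = A_X w₀ + B_X v + C_X ξ, where A_X, B_X ∈ ℝ^{d×d} and C_X ∈ ℝ^{d×n} are measurable functions of X only, v is the ground-truth parameter of the task, and (X, ξ) encodes the sample. Then E_{s∼Unif{±1}} E_{(X,ξ)} ‖Alg(S; w₀) − s w*‖² ≥ E_X ‖(I_d − B_X) w*‖² + σ² E_X tr(C_Xᵀ C_X), where X has i.i.d. N(0, I_d) rows and ξ ∼ N(0, σ² I_n) independent of X. -/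
/-!
STATEMENT 6: Bias–variance lower bound for estimators of the linear form
`Alg(S; w₀) = A_X w₀ + B_X v + C_X ξ` on the subspace meta-learning instance.
-/

open MeasureTheory ProbabilityTheory Matrix
open scoped ENNReal

/-- Squared Euclidean norm on `ℝ^d`. -/
noncomputable def norm2 {d : ℕ} (v : Fin d → ℝ) : ℝ := ∑ i, (v i) ^ 2

/-- Law of a design matrix `X ∈ ℝ^{n×d}` with i.i.d. `N(0, I_d)` rows. -/
noncomputable def gaussX (n d : ℕ) : Measure (Fin n → Fin d → ℝ) :=
  Measure.pi fun _ => Measure.pi fun _ => gaussianReal 0 1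

/-- Law of the label noise `ξ ∼ N(0, σ² I_n)`. -/
noncomputable def gaussNoise (n : ℕ) (σ : ℝ) : Measure (Fin n → ℝ) :=
  Measure.pi fun _ => gaussianReal 0 (Real.toNNReal (σ ^ 2))

section Aux
open Real

-- second moment of exp(-b x^2)
lemma sq_exp_int {b : ℝ} (hb : 0 < b) :
    Integrable (fun x : ℝ => x ^ 2 * Real.exp (-b * x ^ 2)) := by
  have h := integrable_rpow_mul_exp_neg_mul_sq hb (s := 2) (by norm_num)
  refine h.congr ?_
  filter_upwards with x
  rw [show (2 : ℝ) = ((2 : ℕ) : ℝ) by norm_num, Real.rpow_natCast]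

lemma sq_exp_eval {b : ℝ} (hb : 0 < b) :
    ∫ x : ℝ, x ^ 2 * Real.exp (-b * x ^ 2) = (2 * b)⁻¹ * Real.sqrt (π / b) := by
  have hu : ∀ x : ℝ, HasDerivAt (fun y : ℝ => y) 1 x := fun x => hasDerivAt_id x
  have hv : ∀ x : ℝ, HasDerivAt (fun y : ℝ => -(2 * b)⁻¹ * Real.exp (-b * y ^ 2))
      (x * Real.exp (-b * x ^ 2)) x := by
    intro x
    have h1 : HasDerivAt (fun y : ℝ => -b * y ^ 2) (-b * (2 * x)) x := by
      simpa using ((hasDerivAt_pow 2 x).const_mul (-b))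
    have h2 := (h1.exp).const_mul (-(2 * b)⁻¹)
    refine h2.congr_deriv ?_
    field_simp
  have huv' : Integrable ((fun y : ℝ => y) * fun x => x * Real.exp (-b * x ^ 2)) := by
    refine (sq_exp_int hb).congr ?_
    filter_upwards with x
    simp [Pi.mul_apply]; ring
  have hu'v : Integrable ((fun _ : ℝ => (1:ℝ)) * fun y : ℝ => -(2 * b)⁻¹ * Real.exp (-b * y ^ 2)) := by
    refine ((integrable_exp_neg_mul_sq hb).const_mul (-(2 * b)⁻¹)).congr ?_
    filter_upwards with x
    simp [Pi.mul_apply]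
  have huv : Integrable ((fun y : ℝ => y) * fun y : ℝ => -(2 * b)⁻¹ * Real.exp (-b * y ^ 2)) := by
    refine ((integrable_mul_exp_neg_mul_sq hb).const_mul (-(2 * b)⁻¹)).congr ?_
    filter_upwards with x
    simp [Pi.mul_apply]; ring
  have key := integral_mul_deriv_eq_deriv_mul_of_integrable (fun x _ => hu x) (fun x _ => hv x) huv' hu'v huv
  have e1 : ∫ x : ℝ, x * (x * Real.exp (-b * x ^ 2)) = ∫ x : ℝ, x ^ 2 * Real.exp (-b * x ^ 2) := by
    congr 1; funext x; ring
  rw [e1] at key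
  rw [key]
  have e2 : ∫ x : ℝ, (1:ℝ) * (-(2 * b)⁻¹ * Real.exp (-b * x ^ 2))
      = -(2 * b)⁻¹ * Real.sqrt (π / b) := by
    simp_rw [one_mul]
    rw [integral_const_mul, integral_gaussian]
  rw [e2]; ring

open scoped ENNReal NNReal

lemma gauss_integral_eq {v : NNReal} (hv : v ≠ 0) (g : ℝ → ℝ) :
    ∫ x, g x ∂(gaussianReal 0 v) = ∫ x, gaussianPDFReal 0 v x * g x := by
  rw [gaussianReal_of_var_ne_zero 0 hv]
  have hm : Measurable fun x => (gaussianPDFReal 0 v x).toNNReal :=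
    (measurable_gaussianPDFReal 0 v).real_toNNReal
  have h : (gaussianPDF 0 v)
      = fun x => (((gaussianPDFReal 0 v x).toNNReal : NNReal) : ℝ≥0∞) := by
    funext x; simp [gaussianPDF, ENNReal.ofReal]
  rw [h, integral_withDensity_eq_integral_smul hm]
  congr 1; funext x
  simp [NNReal.smul_def, Real.coe_toNNReal _ (gaussianPDFReal_nonneg 0 v x)]

lemma gauss_integrable_iff {v : NNReal} (hv : v ≠ 0) {g : ℝ → ℝ} (hg : Measurable g) :
    Integrable g (gaussianReal 0 v) ↔ Integrable (fun x => g x * gaussianPDFReal 0 v x) := by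
  rw [gaussianReal_of_var_ne_zero 0 hv]
  rw [integrable_withDensity_iff (measurable_gaussianPDF 0 v)
    (Filter.Eventually.of_forall fun x => ENNReal.ofReal_lt_top)]
  have h : ∀ x : ℝ, (gaussianPDF 0 v x).toReal = gaussianPDFReal 0 v x := fun x => by
    simp [gaussianPDF, ENNReal.toReal_ofReal (gaussianPDFReal_nonneg 0 v x)]
  constructor
  · intro hh; refine hh.congr ?_; filter_upwards with x; rw [h]
  · intro hh; refine hh.congr ?_; filter_upwards with x; rw [h]

lemma pdf_mul_form {v : NNReal} (hv : v ≠ 0) (gx : ℝ) (x : ℝ) :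
    gaussianPDFReal 0 v x * gx
      = (Real.sqrt (2 * π * v))⁻¹ * (gx * Real.exp (-(2 * (v:ℝ))⁻¹ * x ^ 2)) := by
  have hvpos : (0:ℝ) < v := by positivity
  rw [gaussianPDFReal]
  rw [show -(x - 0) ^ 2 / (2 * (v:ℝ)) = -(2 * (v:ℝ))⁻¹ * x ^ 2 by
    rw [sub_zero]; field_simp]
  ring

lemma gauss_int_id {v : NNReal} (hv : v ≠ 0) :
    Integrable (fun x => x) (gaussianReal 0 v) := by
  have hvpos : (0:ℝ) < v := by positivity
  have hb : (0:ℝ) < (2 * (v:ℝ))⁻¹ := by positivity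
  rw [gauss_integrable_iff hv (by fun_prop)]
  refine (((integrable_mul_exp_neg_mul_sq hb).const_mul
    ((Real.sqrt (2 * π * v))⁻¹)).congr ?_)
  filter_upwards with x
  rw [mul_comm (x : ℝ) (gaussianPDFReal 0 v x), pdf_mul_form hv]

lemma gauss_int_sq {v : NNReal} (hv : v ≠ 0) :
    Integrable (fun x => x ^ 2) (gaussianReal 0 v) := by
  have hvpos : (0:ℝ) < v := by positivity
  have hb : (0:ℝ) < (2 * (v:ℝ))⁻¹ := by positivity
  rw [gauss_integrable_iff hv (by fun_prop)]
  refine (((sq_exp_int hb).const_mul ((Real.sqrt (2 * π * v))⁻¹)).congr ?_)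
  filter_upwards with x
  rw [mul_comm (x ^ 2) (gaussianPDFReal 0 v x), pdf_mul_form hv]

lemma gauss_moment_one {v : NNReal} : ∫ x, x ∂(gaussianReal 0 v) = 0 := by
  have hmap := gaussianReal_map_const_mul (μ := 0) (v := v) (-1)
  have h2 : (NNReal.mk ((-1:ℝ)^2) (sq_nonneg _) * v : NNReal) = v := NNReal.eq (by simp)
  rw [mul_zero, h2] at hmap
  have h : ∫ x, x ∂(gaussianReal 0 v) = ∫ x, (-1 : ℝ) * x ∂(gaussianReal 0 v) := by
    conv_lhs => rw [← hmap]
    exact integral_map (by fun_prop) measurable_id.aestronglyMeasurable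
  rw [integral_const_mul] at h
  linarith

lemma gauss_moment_sq {v : NNReal} (hv : v ≠ 0) :
    ∫ x, x ^ 2 ∂(gaussianReal 0 v) = v := by
  have hvpos : (0:ℝ) < v := by positivity
  have hb : (0:ℝ) < (2 * (v:ℝ))⁻¹ := by positivity
  rw [gauss_integral_eq hv]
  calc ∫ x, gaussianPDFReal 0 v x * x ^ 2
      = ∫ x, (Real.sqrt (2 * π * v))⁻¹ * (x ^ 2 * Real.exp (-(2 * (v:ℝ))⁻¹ * x ^ 2)) := by
        congr 1; funext x; rw [pdf_mul_form hv]
    _ = (Real.sqrt (2 * π * v))⁻¹ * ((2 * (2 * (v:ℝ))⁻¹)⁻¹ * Real.sqrt (π / (2 * (v:ℝ))⁻¹)) := by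
        rw [integral_const_mul, sq_exp_eval hb]
    _ = v := by
        rw [show π / (2 * (v:ℝ))⁻¹ = 2 * π * v by field_simp]
        rw [show (2 * (2 * (v:ℝ))⁻¹)⁻¹ = v by field_simp]
        have h : Real.sqrt (2 * π * v) ≠ 0 := by
          refine ne_of_gt (Real.sqrt_pos.mpr ?_); positivity
        field_simp

lemma pi_integrable_prod {n : ℕ} (μ : Measure ℝ) [IsProbabilityMeasure μ] (f : Fin n → ℝ → ℝ)
    (hf : ∀ i, Integrable (f i) μ) :
    Integrable (fun ξ : Fin n → ℝ => ∏ i, f i (ξ i)) (Measure.pi fun _ => μ) := by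
  letI : MeasureSpace ℝ := ⟨μ⟩
  haveI : SigmaFinite (volume : Measure ℝ) := (by infer_instance : SigmaFinite μ)
  exact Integrable.fintype_prod hf

lemma pi_integral_prod {n : ℕ} (μ : Measure ℝ) [IsProbabilityMeasure μ] (f : Fin n → ℝ → ℝ) :
    ∫ ξ, ∏ i, f i (ξ i) ∂(Measure.pi fun _ : Fin n => μ) = ∏ i, ∫ x, f i x ∂μ := by
  letI : MeasureSpace ℝ := ⟨μ⟩
  haveI : SigmaFinite (volume : Measure ℝ) := (by infer_instance : SigmaFinite μ)
  exact integral_fintype_prod_eq_prod (ι := Fin n) (fun _ => f _)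

section Moments
variable {n : ℕ} {v : NNReal}

lemma prod_eval (j : Fin n) (ξ : Fin n → ℝ) :
    (∏ i, if i = j then ξ i else 1) = ξ j := Fintype.prod_ite_eq' j ξ

lemma prod_eval_mul (j k : Fin n) (ξ : Fin n → ℝ) :
    (∏ i, ((if i = j then ξ i else 1) * (if i = k then ξ i else 1))) = ξ j * ξ k := by
  rw [Finset.prod_mul_distrib, Fintype.prod_ite_eq' j ξ, Fintype.prod_ite_eq' k ξ]

lemma pi_eval_int (hv : v ≠ 0) (j : Fin n) :
    Integrable (fun ξ : Fin n → ℝ => ξ j) (Measure.pi fun _ => gaussianReal 0 v) := by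
  have h := pi_integrable_prod (gaussianReal 0 v)
    (fun i => fun x => if i = j then x else 1) (fun i => by
      by_cases h1 : i = j <;> simp only [h1, if_pos, if_neg, if_true, if_false]
      · exact gauss_int_id hv
      · simp [h1])
  refine h.congr (Filter.Eventually.of_forall fun ξ => prod_eval j ξ)

lemma pi_eval_integral (hv : v ≠ 0) (j : Fin n) :
    ∫ ξ, ξ j ∂(Measure.pi fun _ : Fin n => gaussianReal 0 v) = 0 := by
  have h := pi_integral_prod (gaussianReal 0 v)
    (fun i => fun x => if i = j then x else 1)
  rw [show (∫ ξ, ξ j ∂(Measure.pi fun _ : Fin n => gaussianReal 0 v))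
      = ∫ ξ, ∏ i, (if i = j then ξ i else 1) ∂(Measure.pi fun _ : Fin n => gaussianReal 0 v) by
    congr 1; funext ξ; rw [prod_eval j ξ]]
  rw [h]
  refine Finset.prod_eq_zero (Finset.mem_univ j) ?_
  simp [gauss_moment_one]

lemma pi_eval_mul_int (hv : v ≠ 0) (j k : Fin n) :
    Integrable (fun ξ : Fin n → ℝ => ξ j * ξ k) (Measure.pi fun _ => gaussianReal 0 v) := by
  have h := pi_integrable_prod (gaussianReal 0 v)
    (fun i => fun x => (if i = j then x else 1) * (if i = k then x else 1)) (fun i => by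
      show Integrable (fun x : ℝ => (if i = j then x else 1) * (if i = k then x else 1))
        (gaussianReal 0 v)
      rcases eq_or_ne i j with h1 | h1 <;> rcases eq_or_ne i k with h2 | h2
      · rw [show (fun x : ℝ => (if i = j then x else 1) * (if i = k then x else 1))
            = fun x => x ^ 2 from by funext x; rw [if_pos h1, if_pos h2]; ring]
        exact gauss_int_sq hv
      · rw [show (fun x : ℝ => (if i = j then x else 1) * (if i = k then x else 1))
            = fun x => x from by funext x; rw [if_pos h1, if_neg h2, mul_one]]
        exact gauss_int_id hv
      · rw [show (fun x : ℝ => (if i = j then x else 1) * (if i = k then x else 1))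
            = fun x => x from by funext x; rw [if_neg h1, if_pos h2, one_mul]]
        exact gauss_int_id hv
      · rw [show (fun x : ℝ => (if i = j then x else 1) * (if i = k then x else 1))
            = fun _ => (1:ℝ) from by funext x; rw [if_neg h1, if_neg h2, mul_one]]
        exact integrable_const 1)
  refine h.congr (Filter.Eventually.of_forall fun ξ => prod_eval_mul j k ξ)

lemma pi_eval_mul_integral (hv : v ≠ 0) (j k : Fin n) :
    ∫ ξ, ξ j * ξ k ∂(Measure.pi fun _ : Fin n => gaussianReal 0 v)
      = if j = k then (v : ℝ) else 0 := by
  have h := pi_integral_prod (gaussianReal 0 v)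
    (fun i => fun x => (if i = j then x else 1) * (if i = k then x else 1))
  rw [show (∫ ξ, ξ j * ξ k ∂(Measure.pi fun _ : Fin n => gaussianReal 0 v))
      = ∫ ξ, ∏ i, ((if i = j then ξ i else 1) * (if i = k then ξ i else 1))
          ∂(Measure.pi fun _ : Fin n => gaussianReal 0 v) by
    congr 1; funext ξ; rw [prod_eval_mul j k ξ]]
  rw [h]
  by_cases hjk : j = k
  · subst hjk
    rw [if_pos rfl, Finset.prod_eq_single j]
    · rw [show (∫ x, (if j = j then x else 1) * (if j = j then x else 1) ∂(gaussianReal 0 v))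
          = ∫ x, x ^ 2 ∂(gaussianReal 0 v) by congr 1; funext x; simp; ring]
      exact gauss_moment_sq hv
    · intro i _ hij
      rw [show (∫ x, (if i = j then x else 1) * (if i = j then x else 1) ∂(gaussianReal 0 v))
          = ∫ x, (1:ℝ) ∂(gaussianReal 0 v) by congr 1; funext x; simp [hij]]
      simp
    · intro habs; exact absurd (Finset.mem_univ j) habs
  · rw [if_neg hjk]
    refine Finset.prod_eq_zero (Finset.mem_univ j) ?_
    rw [show (∫ x, (if j = j then x else 1) * (if j = k then x else 1) ∂(gaussianReal 0 v))
        = ∫ x, x ∂(gaussianReal 0 v) by congr 1; funext x; simp [hjk]]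
    exact gauss_moment_one

end Moments

section Quad

variable {n : ℕ} {σ : ℝ}

lemma vNe (hσ : 0 < σ) : Real.toNNReal (σ ^ 2) ≠ 0 := by
  simp only [ne_eq, Real.toNNReal_eq_zero, not_le]
  positivity

lemma vCoe (hσ : 0 < σ) : ((Real.toNNReal (σ ^ 2)) : ℝ) = σ ^ 2 :=
  Real.coe_toNNReal _ (sq_nonneg σ)

instance gaussNoise_prob : IsProbabilityMeasure (gaussNoise n σ) := by
  unfold gaussNoise; infer_instance

lemma noise_eval_int (hσ : 0 < σ) (j : Fin n) :
    Integrable (fun ξ : Fin n → ℝ => ξ j) (gaussNoise n σ) := pi_eval_int (vNe hσ) j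

lemma noise_eval_mul_int (hσ : 0 < σ) (j k : Fin n) :
    Integrable (fun ξ : Fin n → ℝ => ξ j * ξ k) (gaussNoise n σ) := pi_eval_mul_int (vNe hσ) j k

lemma noise_eval_integral (hσ : 0 < σ) (j : Fin n) :
    ∫ ξ, ξ j ∂(gaussNoise n σ) = 0 := pi_eval_integral (vNe hσ) j

lemma noise_eval_mul_integral (hσ : 0 < σ) (j k : Fin n) :
    ∫ ξ, ξ j * ξ k ∂(gaussNoise n σ) = if j = k then σ ^ 2 else 0 := by
  rw [show (∫ ξ, ξ j * ξ k ∂(gaussNoise n σ))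
      = if j = k then ((Real.toNNReal (σ ^ 2)) : ℝ) else 0 from
    pi_eval_mul_integral (vNe hσ) j k, vCoe hσ]

lemma key_expand (a : ℝ) (c : Fin n → ℝ) (ξ : Fin n → ℝ) :
    (a + ∑ j, c j * ξ j) ^ 2
      = a ^ 2 + ((∑ j, (2 * a * c j) * ξ j)
          + ∑ j, ∑ k, (c j * c k) * (ξ j * ξ k)) := by
  rw [add_sq, pow_two (∑ j, c j * ξ j), Finset.sum_mul_sum, Finset.mul_sum]
  rw [add_assoc]
  congr 1
  congr 1
  · exact Finset.sum_congr rfl fun j _ => by ring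
  · exact Finset.sum_congr rfl fun j _ => Finset.sum_congr rfl fun k _ => by ring

lemma quad_int (hσ : 0 < σ) (a : ℝ) (c : Fin n → ℝ) :
    Integrable (fun ξ => (a + ∑ j, c j * ξ j) ^ 2) (gaussNoise n σ) := by
  have hv := vNe hσ
  have h : Integrable (fun ξ : Fin n → ℝ => a ^ 2 + ((∑ j, (2 * a * c j) * ξ j)
      + ∑ j, ∑ k, (c j * c k) * (ξ j * ξ k))) (gaussNoise n σ) := by
    refine (integrable_const _).add (Integrable.add ?_ ?_)
    · exact integrable_finset_sum _ fun j _ => (noise_eval_int hσ j).const_mul _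
    · exact integrable_finset_sum _ fun j _ =>
        integrable_finset_sum _ fun k _ => (noise_eval_mul_int hσ j k).const_mul _
  exact h.congr (Filter.Eventually.of_forall fun ξ => (key_expand a c ξ).symm)

lemma quad_integral (hσ : 0 < σ) (a : ℝ) (c : Fin n → ℝ) :
    ∫ ξ, (a + ∑ j, c j * ξ j) ^ 2 ∂(gaussNoise n σ) = a ^ 2 + σ ^ 2 * ∑ j, (c j) ^ 2 := by
  have hv := vNe hσ
  rw [show (∫ ξ, (a + ∑ j, c j * ξ j) ^ 2 ∂(gaussNoise n σ))
      = ∫ ξ, (a ^ 2 + ((∑ j, (2 * a * c j) * ξ j)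
          + ∑ j, ∑ k, (c j * c k) * (ξ j * ξ k))) ∂(gaussNoise n σ) by
    congr 1; funext ξ; rw [key_expand]]
  have i1 : Integrable (fun ξ : Fin n → ℝ => ∑ j, (2 * a * c j) * ξ j) (gaussNoise n σ) :=
    integrable_finset_sum _ fun j _ => (noise_eval_int hσ j).const_mul _
  have i2 : Integrable (fun ξ : Fin n → ℝ => ∑ j, ∑ k, (c j * c k) * (ξ j * ξ k))
      (gaussNoise n σ) := integrable_finset_sum _ fun j _ =>
    integrable_finset_sum _ fun k _ => (noise_eval_mul_int hσ j k).const_mul _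
  have i12 : Integrable (fun ξ : Fin n → ℝ => (∑ j, (2 * a * c j) * ξ j)
      + ∑ j, ∑ k, (c j * c k) * (ξ j * ξ k)) (gaussNoise n σ) := i1.add i2
  rw [integral_add (integrable_const _) i12, integral_add i1 i2, integral_const]
  simp only [measure_univ, ENNReal.toReal_one, probReal_univ, smul_eq_mul, one_mul]
  rw [integral_finset_sum _ fun j _ => (noise_eval_int hσ j).const_mul _]
  rw [integral_finset_sum _ fun j _ =>
    integrable_finset_sum _ fun k _ => (noise_eval_mul_int hσ j k).const_mul _]
  have e1 : ∀ j : Fin n, ∫ ξ, (2 * a * c j) * ξ j ∂(gaussNoise n σ) = 0 := fun j => by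
    rw [integral_const_mul, noise_eval_integral hσ j, mul_zero]
  have e2 : ∀ j k : Fin n, ∫ ξ, (c j * c k) * (ξ j * ξ k) ∂(gaussNoise n σ)
      = (c j * c k) * (if j = k then σ ^ 2 else 0) := fun j k => by
    rw [integral_const_mul, noise_eval_mul_integral hσ j k]
  have e3 : ∀ j : Fin n, ∫ ξ, ∑ k, (c j * c k) * (ξ j * ξ k) ∂(gaussNoise n σ)
      = ∑ k, (c j * c k) * (if j = k then σ ^ 2 else 0) := fun j => by
    rw [integral_finset_sum _ fun k _ => (noise_eval_mul_int hσ j k).const_mul _]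
    exact Finset.sum_congr rfl fun k _ => e2 j k
  simp only [e1, e3, Finset.sum_const_zero, add_zero, zero_add]
  rw [show (∑ j : Fin n, ∑ k : Fin n, (c j * c k) * (if j = k then σ ^ 2 else 0))
      = ∑ j : Fin n, (c j) ^ 2 * σ ^ 2 by
    refine Finset.sum_congr rfl fun j _ => ?_
    rw [Finset.sum_eq_single j]
    · simp [pow_two]
    · intro k _ hkj; simp [Ne.symm hkj]
    · intro habs; exact absurd (Finset.mem_univ j) habs]
  rw [← Finset.sum_mul]
  ring

end Quad

open Matrix in
lemma trace_eq {d n : ℕ} (c : Matrix (Fin d) (Fin n) ℝ) :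
    Matrix.trace (cᵀ * c) = ∑ i, ∑ j, (c i j) ^ 2 := by
  rw [Matrix.trace]
  rw [show ∑ j, Matrix.diag (cᵀ * c) j = ∑ j, ∑ i, (c i j) ^ 2 from
    Finset.sum_congr rfl fun j _ => by
      simp [Matrix.diag, Matrix.mul_apply, Matrix.transpose_apply, sq]]
  exact Finset.sum_comm

lemma norm2_nonneg {d : ℕ} (v : Fin d → ℝ) : 0 ≤ norm2 v :=
  Finset.sum_nonneg fun _ _ => sq_nonneg _

lemma lint_norm2 {d n : ℕ} {σ : ℝ} (hσ : 0 < σ) (u : Fin d → ℝ)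
    (c : Matrix (Fin d) (Fin n) ℝ) :
    ∫⁻ ξ, ENNReal.ofReal (norm2 (fun i => u i + c.mulVec ξ i)) ∂(gaussNoise n σ)
      = ENNReal.ofReal (norm2 u + σ ^ 2 * ∑ i, ∑ j, (c i j) ^ 2) := by
  have h0 : ∀ ξ : Fin n → ℝ, norm2 (fun i => u i + c.mulVec ξ i)
      = ∑ i, (u i + ∑ j, c i j * ξ j) ^ 2 := by
    intro ξ; unfold norm2; exact Finset.sum_congr rfl fun i _ => by
      simp [Matrix.mulVec, dotProduct]
  have hint : Integrable (fun ξ : Fin n → ℝ => ∑ i, (u i + ∑ j, c i j * ξ j) ^ 2)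
      (gaussNoise n σ) := integrable_finset_sum _ fun i _ => quad_int hσ (u i) (c i)
  have hnn : 0 ≤ᵐ[gaussNoise n σ] fun ξ : Fin n → ℝ => ∑ i, (u i + ∑ j, c i j * ξ j) ^ 2 :=
    Filter.Eventually.of_forall fun ξ => Finset.sum_nonneg fun i _ => sq_nonneg _
  calc ∫⁻ ξ, ENNReal.ofReal (norm2 (fun i => u i + c.mulVec ξ i)) ∂(gaussNoise n σ)
      = ∫⁻ ξ, ENNReal.ofReal (∑ i, (u i + ∑ j, c i j * ξ j) ^ 2) ∂(gaussNoise n σ) :=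
        lintegral_congr fun ξ => by rw [h0]
    _ = ENNReal.ofReal (∫ ξ, ∑ i, (u i + ∑ j, c i j * ξ j) ^ 2 ∂(gaussNoise n σ)) :=
        (ofReal_integral_eq_lintegral_ofReal hint hnn).symm
    _ = ENNReal.ofReal (norm2 u + σ ^ 2 * ∑ i, ∑ j, (c i j) ^ 2) := by
        congr 1
        rw [integral_finset_sum _ fun i _ => quad_int hσ (u i) (c i)]
        rw [show ∑ i, ∫ ξ, (u i + ∑ j, c i j * ξ j) ^ 2 ∂(gaussNoise n σ)
            = ∑ i, ((u i) ^ 2 + σ ^ 2 * ∑ j, (c i j) ^ 2) from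
          Finset.sum_congr rfl fun i _ => quad_integral hσ (u i) (c i)]
        rw [Finset.sum_add_distrib, ← Finset.mul_sum]
        rfl

lemma parallelogram {d : ℕ} (p q : Fin d → ℝ) :
    norm2 (fun i => p i - q i) + norm2 (fun i => p i + q i) = 2 * norm2 p + 2 * norm2 q := by
  unfold norm2
  rw [← Finset.sum_add_distrib, Finset.mul_sum, Finset.mul_sum, ← Finset.sum_add_distrib]
  exact Finset.sum_congr rfl fun i _ => by ring

lemma point_ineq {d : ℕ} {σ : ℝ} (hσ : 0 < σ) (p q : Fin d → ℝ) (t : ℝ) (ht : 0 ≤ t) :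
    ENNReal.ofReal (norm2 q) + ENNReal.ofReal (σ ^ 2) * ENNReal.ofReal t
      ≤ 2⁻¹ * (ENNReal.ofReal (norm2 (fun i => p i - 1 * q i) + σ ^ 2 * t)
          + ENNReal.ofReal (norm2 (fun i => p i - (-1) * q i) + σ ^ 2 * t)) := by
  have h1 : (fun i => p i - 1 * q i) = fun i => p i - q i := funext fun i => by ring
  have h2 : (fun i => p i - (-1) * q i) = fun i => p i + q i := funext fun i => by ring
  rw [h1, h2]
  have hs : 0 ≤ σ ^ 2 * t := by positivity
  have hsum : norm2 (fun i => p i - q i) + σ ^ 2 * t + (norm2 (fun i => p i + q i) + σ ^ 2 * t)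
      = 2 * (norm2 q + σ ^ 2 * t + norm2 p) := by
    have hp := parallelogram p q; linarith
  have hcomb : ENNReal.ofReal (norm2 (fun i => p i - q i) + σ ^ 2 * t)
      + ENNReal.ofReal (norm2 (fun i => p i + q i) + σ ^ 2 * t)
      = ENNReal.ofReal (2 * (norm2 q + σ ^ 2 * t + norm2 p)) := by
    rw [← ENNReal.ofReal_add (add_nonneg (norm2_nonneg _) hs) (add_nonneg (norm2_nonneg _) hs),
      hsum]
  rw [hcomb, ENNReal.ofReal_mul (by norm_num : (0:ℝ) ≤ 2)]
  rw [show ENNReal.ofReal (2:ℝ) = 2 from by norm_num]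
  rw [← mul_assoc, ENNReal.inv_mul_cancel (by norm_num) (by norm_num), one_mul]
  calc ENNReal.ofReal (norm2 q) + ENNReal.ofReal (σ ^ 2) * ENNReal.ofReal t
      = ENNReal.ofReal (norm2 q + σ ^ 2 * t) := by
        rw [← ENNReal.ofReal_mul (sq_nonneg σ), ← ENNReal.ofReal_add (norm2_nonneg q) hs]
    _ ≤ ENNReal.ofReal (norm2 q + σ ^ 2 * t + norm2 p) :=
        ENNReal.ofReal_le_ofReal (by have := norm2_nonneg p; linarith)

end Aux

theorem linear_estimator_bias_variance_lower_bound
    (d n : ℕ) (hd : 1 ≤ d) (hn : 1 ≤ n) (wstar w0 : Fin d → ℝ) (σ : ℝ) (hσ : 0 < σ)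
    (A B : (Fin n → Fin d → ℝ) → Matrix (Fin d) (Fin d) ℝ)
    (C : (Fin n → Fin d → ℝ) → Matrix (Fin d) (Fin n) ℝ)
    (hA : ∀ i j, Measurable fun X => A X i j)
    (hB : ∀ i j, Measurable fun X => B X i j)
    (hC : ∀ i j, Measurable fun X => C X i j) :
    (∫⁻ X, ENNReal.ofReal
        (norm2 ((((1 : Matrix (Fin d) (Fin d) ℝ) - B X)).mulVec wstar)) ∂(gaussX n d))
      + ENNReal.ofReal (σ ^ 2) *
        (∫⁻ X, ENNReal.ofReal (Matrix.trace ((C X)ᵀ * C X)) ∂(gaussX n d))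
    ≤ 2⁻¹ * ∑ s ∈ ({1, -1} : Finset ℝ),
        ∫⁻ X, ∫⁻ ξ, ENNReal.ofReal
            (norm2 ((A X).mulVec w0 + (B X).mulVec (s • wstar) + (C X).mulVec ξ - s • wstar))
          ∂(gaussNoise n σ) ∂(gaussX n d) := by
  -- measurability of components
  have hAv : ∀ i, Measurable fun X => (A X).mulVec w0 i := by
    intro i
    have h : (fun X => (A X).mulVec w0 i) = fun X => ∑ j, A X i j * w0 j := by
      funext X; simp [Matrix.mulVec, dotProduct]
    rw [h]
    exact Finset.measurable_sum _ fun j _ => (hA i j).mul measurable_const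
  have hBv : ∀ i, Measurable fun X =>
      ((1 : Matrix (Fin d) (Fin d) ℝ) - B X).mulVec wstar i := by
    intro i
    have h : (fun X => ((1 : Matrix (Fin d) (Fin d) ℝ) - B X).mulVec wstar i)
        = fun X => ∑ j, ((if i = j then (1:ℝ) else 0) - B X i j) * wstar j := by
      funext X; simp [Matrix.mulVec, dotProduct, Matrix.sub_apply, Matrix.one_apply]
    rw [h]
    exact Finset.measurable_sum _ fun j _ => (measurable_const.sub (hB i j)).mul measurable_const
  have htv : Measurable fun X => ∑ i, ∑ j, (C X i j) ^ 2 :=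
    Finset.measurable_sum _ fun i _ => Finset.measurable_sum _ fun j _ => (hC i j).pow_const 2
  have hmeas_m : Measurable fun X => ENNReal.ofReal
      (norm2 (((1 : Matrix (Fin d) (Fin d) ℝ) - B X).mulVec wstar)) := by
    apply Measurable.ennreal_ofReal
    unfold norm2
    exact Finset.measurable_sum _ fun i _ => (hBv i).pow_const 2
  have hmeas_t : Measurable fun X => ENNReal.ofReal (∑ i, ∑ j, (C X i j) ^ 2) :=
    htv.ennreal_ofReal
  have hg : ∀ s : ℝ, Measurable fun X => ENNReal.ofReal
      (norm2 (fun i => (A X).mulVec w0 i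
          - s * ((1 : Matrix (Fin d) (Fin d) ℝ) - B X).mulVec wstar i)
        + σ ^ 2 * ∑ i, ∑ j, (C X i j) ^ 2) := by
    intro s
    apply Measurable.ennreal_ofReal
    apply Measurable.add
    · unfold norm2
      exact Finset.measurable_sum _ fun i _ =>
        ((hAv i).sub ((hBv i).const_mul s)).pow_const 2
    · exact htv.const_mul _
  -- rewrite inner integrals
  have hinner : ∀ (s : ℝ) (X : Fin n → Fin d → ℝ),
      (∫⁻ ξ, ENNReal.ofReal (norm2 ((A X).mulVec w0 + (B X).mulVec (s • wstar)
          + (C X).mulVec ξ - s • wstar)) ∂(gaussNoise n σ))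
        = ENNReal.ofReal (norm2 (fun i => (A X).mulVec w0 i
              - s * ((1 : Matrix (Fin d) (Fin d) ℝ) - B X).mulVec wstar i)
            + σ ^ 2 * ∑ i, ∑ j, (C X i j) ^ 2) := by
    intro s X
    have e : ∀ ξ : Fin n → ℝ,
        ((A X).mulVec w0 + (B X).mulVec (s • wstar) + (C X).mulVec ξ - s • wstar)
          = fun i => ((A X).mulVec w0 i
              - s * ((1 : Matrix (Fin d) (Fin d) ℝ) - B X).mulVec wstar i)
            + (C X).mulVec ξ i := by
      intro ξ; funext i
      simp only [Pi.add_apply, Pi.sub_apply, Pi.smul_apply, smul_eq_mul,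
        Matrix.mulVec_smul, Matrix.sub_mulVec, Matrix.one_mulVec]
      ring
    rw [show (fun ξ => ENNReal.ofReal (norm2 ((A X).mulVec w0 + (B X).mulVec (s • wstar)
        + (C X).mulVec ξ - s • wstar)))
        = fun ξ => ENNReal.ofReal (norm2 (fun i => ((A X).mulVec w0 i
            - s * ((1 : Matrix (Fin d) (Fin d) ℝ) - B X).mulVec wstar i)
          + (C X).mulVec ξ i)) from funext fun ξ => by rw [e ξ]]
    exact lint_norm2 hσ _ (C X)
  -- rewrite RHS
  rw [Finset.sum_pair (by norm_num : (1:ℝ) ≠ -1)]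
  have hI : ∀ s : ℝ, (∫⁻ X, ∫⁻ ξ, ENNReal.ofReal
      (norm2 ((A X).mulVec w0 + (B X).mulVec (s • wstar) + (C X).mulVec ξ - s • wstar))
        ∂(gaussNoise n σ) ∂(gaussX n d))
      = ∫⁻ X, ENNReal.ofReal (norm2 (fun i => (A X).mulVec w0 i
            - s * ((1 : Matrix (Fin d) (Fin d) ℝ) - B X).mulVec wstar i)
          + σ ^ 2 * ∑ i, ∑ j, (C X i j) ^ 2) ∂(gaussX n d) := fun s =>
    lintegral_congr fun X => hinner s X
  rw [hI 1, hI (-1), ← lintegral_add_left (hg 1), ← lintegral_const_mul 2⁻¹ (f := fun X => _ + _) ((hg 1).add (hg (-1)))]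
  -- rewrite LHS
  rw [show (∫⁻ X, ENNReal.ofReal (Matrix.trace ((C X)ᵀ * C X)) ∂(gaussX n d))
      = ∫⁻ X, ENNReal.ofReal (∑ i, ∑ j, (C X i j) ^ 2) ∂(gaussX n d) from
    lintegral_congr fun X => by rw [trace_eq]]
  rw [← lintegral_const_mul _ hmeas_t, ← lintegral_add_left hmeas_m]
  -- pointwise comparison
  refine lintegral_mono fun X => ?_
  exact point_ineq hσ ((A X).mulVec w0)
    (((1 : Matrix (Fin d) (Fin d) ℝ) - B X).mulVec wstar) _
    (Finset.sum_nonneg fun i _ => Finset.sum_nonneg fun j _ => sq_nonneg _)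
end

section
/- Fix d, n ∈ ℕ with d, n ≥ 1 and let X ∈ ℝ^{n×d} have i.i.d. N(0, I_d) rows. Let s₁ ≥ s₂ ≥ … ≥ s_d ≥ 0 be the eigenvalues of Σ_X = (1/n) Xᵀ X. Then for every convex function f : ℝ → ℝ (integrable against the relevant distributions): E_X[∑_{i=1}^d f(s_i)] ≥ d·f(1) if n ≥ d, and E_X[∑_{i=1}^d f(s_i)] ≥ n·f(d/n) + (d−n)·f(0) if n < d. -/
/-!
STATEMENT 8: Jensen-type lower bound on the expected sum of a convex function
evaluated at the eigenvalues of the empirical covariance `Σ_X = (1/n) Xᵀ X` of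
a standard Gaussian design matrix.
-/

open MeasureTheory ProbabilityTheory Matrix

/-- Empirical covariance `Σ_X = (1/n) Xᵀ X`. -/
noncomputable def empCov {n d : ℕ} (X : Fin n → Fin d → ℝ) : Matrix (Fin d) (Fin d) ℝ :=
  (n : ℝ)⁻¹ • ((Matrix.of X)ᵀ * Matrix.of X)

/-- The empirical covariance is symmetric (Hermitian). -/
lemma empCov_isHermitian {n d : ℕ} (X : Fin n → Fin d → ℝ) : (empCov X).IsHermitian := by
  have h : ((Matrix.of X)ᵀ * Matrix.of X : Matrix (Fin d) (Fin d) ℝ).IsHermitian := by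
    simpa using Matrix.isHermitian_conjTranspose_mul_self (Matrix.of X)
  simpa [empCov, Matrix.IsHermitian, Matrix.conjTranspose_smul] using
    congrArg (fun M => (n : ℝ)⁻¹ • M) h.eq

/-- The (nonnegative, real) eigenvalues of the empirical covariance. -/
noncomputable def empCovEig {n d : ℕ} (X : Fin n → Fin d → ℝ) : Fin d → ℝ :=
  (empCov_isHermitian X).eigenvalues

open Real Set
open scoped ENNReal NNReal

/- ##### auxiliary lemmas ##### -/

lemma convex_subgradient {f : ℝ → ℝ} (hf : ConvexOn ℝ Set.univ f) (a : ℝ) :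
    ∃ c : ℝ, ∀ x, f a + c * (x - a) ≤ f x := by
  set S : Set ℝ := (fun x => (f x - f a) / (x - a)) '' Set.Iio a with hS
  have hne : S.Nonempty := ⟨_, ⟨a - 1, by simp [Set.mem_Iio], rfl⟩⟩
  have hmono : ∀ x ∈ Set.Iio a, ∀ y ∈ Set.Ioi a,
      (f x - f a) / (x - a) ≤ (f y - f a) / (y - a) := fun x hx y hy =>
    hf.secant_mono (Set.mem_univ a) (Set.mem_univ x) (Set.mem_univ y)
      (ne_of_lt hx) (ne_of_gt hy) (le_of_lt (lt_trans hx hy))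
  have hbdd : BddAbove S := ⟨(f (a + 1) - f a) / (a + 1 - a), by
    rintro _ ⟨x, hx, rfl⟩
    exact hmono x hx (a + 1) (by simp [Set.mem_Ioi])⟩
  refine ⟨sSup S, fun x => ?_⟩
  rcases lt_trichotomy x a with h | h | h
  · have hle : (f x - f a) / (x - a) ≤ sSup S := le_csSup hbdd ⟨x, h, rfl⟩
    have hxa : x - a < 0 := by linarith
    nlinarith [div_le_iff_of_neg hxa |>.mp hle]
  · simp [h]
  · have hge : sSup S ≤ (f x - f a) / (x - a) := csSup_le hne (by
      rintro _ ⟨y, hy, rfl⟩; exact hmono y hy x h)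
    have hxa : 0 < x - a := by linarith
    nlinarith [(le_div_iff₀ hxa).mp hge]

lemma sum_eig_eq_trace {m : Type*} [Fintype m] [DecidableEq m]
    {A : Matrix m m ℝ} (hA : A.IsHermitian) :
    ∑ i, hA.eigenvalues i = A.trace := by
  have h := hA.spectral_theorem
  have hU : star (hA.eigenvectorUnitary : Matrix m m ℝ) * (hA.eigenvectorUnitary : Matrix m m ℝ)
      = 1 := Matrix.mem_unitaryGroup_iff'.mp hA.eigenvectorUnitary.2
  calc ∑ i, hA.eigenvalues i
      = (Matrix.diagonal (RCLike.ofReal ∘ hA.eigenvalues) : Matrix m m ℝ).trace := by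
        simp [Matrix.trace_diagonal]
    _ = A.trace := by
        conv_rhs => rw [h]
        rw [Unitary.conjStarAlgAut_apply, Matrix.trace_mul_cycle, hU, Matrix.one_mul]

lemma eval_measurePreserving {ι : Type*} [Fintype ι] [DecidableEq ι] {α : ι → Type*}
    [∀ i, MeasurableSpace (α i)] (μ : ∀ i, Measure (α i)) [∀ i, IsProbabilityMeasure (μ i)]
    (i : ι) : MeasurePreserving (Function.eval i) (Measure.pi μ) (μ i) := by
  refine ⟨measurable_pi_apply i, ?_⟩
  ext s hs
  rw [Measure.map_apply (measurable_pi_apply i) hs, Set.eval_preimage, Measure.pi_pi]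
  rw [Fintype.prod_eq_single i (fun j hj => by rw [Function.update_of_ne hj]; exact measure_univ)]
  rw [Function.update_self]

lemma integral_sq_exp_Ioi : ∫ x in Set.Ioi (0:ℝ), x ^ 2 * Real.exp (-(1/2) * x ^ 2)
    = Real.sqrt (2 * Real.pi) / 2 := by
  have h := integral_rpow_mul_exp_neg_mul_rpow (p := 2) (q := 2) (b := 1/2)
    (by norm_num) (by norm_num) (by norm_num)
  have hconv : ∀ x : ℝ, x ^ (2:ℝ) = x ^ 2 := fun x => by
    rw [show (2:ℝ) = ((2:ℕ):ℝ) by norm_num, Real.rpow_natCast]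
  rw [show (∫ x in Set.Ioi (0:ℝ), x ^ (2:ℝ) * Real.exp (-(1/2) * x ^ (2:ℝ)))
      = ∫ x in Set.Ioi (0:ℝ), x ^ 2 * Real.exp (-(1/2) * x ^ 2) by
    refine setIntegral_congr_fun measurableSet_Ioi fun x _ => by rw [hconv]] at h
  rw [h]
  have hG : Real.Gamma ((2 + 1) / 2) = Real.sqrt Real.pi / 2 := by
    rw [show ((2:ℝ) + 1) / 2 = 1/2 + 1 by norm_num, Real.Gamma_add_one (by norm_num),
      Real.Gamma_one_half_eq]
    ring
  rw [hG]
  have h2 : ((1:ℝ)/2) ^ (-((2:ℝ) + 1) / 2) = (2:ℝ) ^ ((3:ℝ)/2) := by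
    rw [one_div, ← Real.rpow_neg_one (2:ℝ), ← Real.rpow_mul (by norm_num : (0:ℝ) ≤ 2)]
    norm_num
  rw [h2, show (3:ℝ)/2 = 1 + 1/2 by norm_num, Real.rpow_add (by norm_num), Real.rpow_one,
    ← Real.sqrt_eq_rpow, Real.sqrt_mul (by norm_num : (0:ℝ) ≤ 2)]
  ring

lemma integral_sq_exp_real : ∫ x : ℝ, x ^ 2 * Real.exp (-x ^ 2 / 2) = Real.sqrt (2 * Real.pi) := by
  have h : ∀ x : ℝ, x ^ 2 * Real.exp (-x ^ 2 / 2)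
      = (fun t => t ^ 2 * Real.exp (-(1/2) * t ^ 2)) |x| := fun x => by
    simp only [sq_abs]; ring_nf
  calc ∫ x : ℝ, x ^ 2 * Real.exp (-x ^ 2 / 2)
      = ∫ x : ℝ, (fun t => t ^ 2 * Real.exp (-(1/2) * t ^ 2)) |x| :=
        integral_congr_ae (Filter.Eventually.of_forall h)
    _ = 2 * ∫ x in Set.Ioi (0:ℝ), x ^ 2 * Real.exp (-(1/2) * x ^ 2) :=
        integral_comp_abs (f := fun t => t ^ 2 * Real.exp (-(1/2) * t ^ 2))
    _ = Real.sqrt (2 * Real.pi) := by rw [integral_sq_exp_Ioi]; ring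

lemma pdf_eq (x : ℝ) : gaussianPDFReal 0 1 x
    = (Real.sqrt (2 * Real.pi))⁻¹ * Real.exp (-x^2/2) := by
  simp [gaussianPDFReal]
  try ring_nf

lemma integrable_sq_mul_exp : Integrable (fun x : ℝ => x ^ 2 * Real.exp (-(1/2) * x ^ 2)) := by
  have := integrable_rpow_mul_exp_neg_mul_sq (b := 1/2) (by norm_num) (s := 2) (by norm_num)
  refine this.congr (Filter.Eventually.of_forall fun x => ?_)
  simp [Real.rpow_natCast]

lemma integrable_sq_gaussian : Integrable (fun x : ℝ => x ^ 2) (gaussianReal 0 1) := by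
  rw [gaussianReal_of_var_ne_zero 0 one_ne_zero]
  have hmeas : Measurable fun x => (gaussianPDFReal 0 1 x).toNNReal :=
    (measurable_gaussianPDFReal 0 1).real_toNNReal
  rw [show gaussianPDF 0 1 = fun x => ((gaussianPDFReal 0 1 x).toNNReal : ℝ≥0∞) from rfl]
  rw [integrable_withDensity_iff_integrable_smul hmeas]
  refine (integrable_sq_mul_exp.const_mul ((Real.sqrt (2 * Real.pi))⁻¹)).congr
    (Filter.Eventually.of_forall fun x => ?_)
  show _ = (gaussianPDFReal 0 1 x).toNNReal • x ^ 2
  rw [NNReal.smul_def, Real.coe_toNNReal _ (gaussianPDFReal_nonneg 0 1 x), smul_eq_mul, pdf_eq]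
  ring

lemma integral_sq_gaussian : ∫ x, x ^ 2 ∂(gaussianReal 0 1) = 1 := by
  rw [gaussianReal_of_var_ne_zero 0 one_ne_zero]
  have hmeas : Measurable fun x => (gaussianPDFReal 0 1 x).toNNReal :=
    (measurable_gaussianPDFReal 0 1).real_toNNReal
  rw [show gaussianPDF 0 1 = fun x => ((gaussianPDFReal 0 1 x).toNNReal : ℝ≥0∞) from rfl]
  rw [integral_withDensity_eq_integral_smul hmeas]
  calc ∫ x, (gaussianPDFReal 0 1 x).toNNReal • x ^ 2
      = ∫ x, (Real.sqrt (2 * Real.pi))⁻¹ * (x ^ 2 * Real.exp (-x^2/2)) := by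
        refine integral_congr_ae (Filter.Eventually.of_forall fun x => ?_)
        show (gaussianPDFReal 0 1 x).toNNReal • x ^ 2 = _
        rw [NNReal.smul_def, Real.coe_toNNReal _ (gaussianPDFReal_nonneg 0 1 x), smul_eq_mul,
          pdf_eq]
        ring
    _ = 1 := by
        rw [integral_const_mul, integral_sq_exp_real, inv_mul_cancel₀]
        positivity

theorem expected_sum_convex_eigenvalues_lower_bound
    (d n : ℕ) (hd : 1 ≤ d) (hn : 1 ≤ n) (f : ℝ → ℝ)
    (hf : ConvexOn ℝ Set.univ f)
    (hint : Integrable (fun X : Fin n → Fin d → ℝ => ∑ i, f (empCovEig X i)) (gaussX n d)) :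
    (d ≤ n →
      (d : ℝ) * f 1 ≤ ∫ X, (∑ i, f (empCovEig X i)) ∂(gaussX n d)) ∧
    (n < d →
      (n : ℝ) * f ((d : ℝ) / (n : ℝ)) + ((d : ℝ) - (n : ℝ)) * f 0
        ≤ ∫ X, (∑ i, f (empCovEig X i)) ∂(gaussX n d)) := by
  classical
  haveI hprob : IsProbabilityMeasure (gaussX n d) := by unfold gaussX; infer_instance
  have hn0 : (n:ℝ) ≠ 0 := Nat.cast_ne_zero.mpr (by omega)
  have coordMP : ∀ (k : Fin n) (i : Fin d),
      MeasurePreserving (fun X : Fin n → Fin d → ℝ => X k i) (gaussX n d) (gaussianReal 0 1) :=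
    fun k i =>
      (eval_measurePreserving (fun _ : Fin d => gaussianReal 0 1) i).comp
        (eval_measurePreserving (fun _ : Fin n => Measure.pi fun _ : Fin d => gaussianReal 0 1) k)
  have hsqm : AEStronglyMeasurable (fun x : ℝ => x ^ 2) (gaussianReal 0 1) :=
    (measurable_id.pow_const 2).aestronglyMeasurable
  have coord_int : ∀ (k : Fin n) (i : Fin d),
      Integrable (fun X : Fin n → Fin d → ℝ => (X k i)^2) (gaussX n d) := fun k i =>
    ((coordMP k i).integrable_comp hsqm).mpr integrable_sq_gaussian
  have coord_intg : ∀ (k : Fin n) (i : Fin d),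
      ∫ X, (X k i)^2 ∂(gaussX n d) = 1 := fun k i => by
    rw [← integral_sq_gaussian, ← (coordMP k i).map_eq]
    exact (integral_map (coordMP k i).measurable.aemeasurable
      (by rw [(coordMP k i).map_eq]; exact hsqm)).symm
  have trace_eq : ∀ X : Fin n → Fin d → ℝ,
      (empCov X).trace = (n:ℝ)⁻¹ * ∑ i : Fin d, ∑ k : Fin n, (X k i)^2 := fun X => by
    simp [empCov, Matrix.trace, Matrix.diag, Matrix.mul_apply, Finset.mul_sum, sq]
  have inner_int : ∀ i : Fin d,
      Integrable (fun X : Fin n → Fin d → ℝ => ∑ k : Fin n, (X k i)^2) (gaussX n d) :=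
    fun i => integrable_finset_sum _ fun k _ => coord_int k i
  have tr_int : Integrable (fun X => (empCov X).trace) (gaussX n d) := by
    have h : Integrable
        (fun X : Fin n → Fin d → ℝ => (n:ℝ)⁻¹ * ∑ i : Fin d, ∑ k : Fin n, (X k i)^2)
        (gaussX n d) := (integrable_finset_sum _ fun i _ => inner_int i).const_mul _
    exact h.congr (Filter.Eventually.of_forall fun X => (trace_eq X).symm)
  have tr_intg : ∫ X, (empCov X).trace ∂(gaussX n d) = d := by
    rw [integral_congr_ae (Filter.Eventually.of_forall trace_eq), integral_const_mul,
      integral_finset_sum _ (fun i _ => inner_int i)]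
    have h1 : ∀ i : Fin d, (∫ X, (∑ k : Fin n, (X k i)^2) ∂(gaussX n d)) = (n:ℝ) := fun i => by
      rw [integral_finset_sum _ (fun k _ => coord_int k i)]
      simp [coord_intg]
    rw [Finset.sum_congr rfl (fun i _ => h1 i)]
    simp
    field_simp
  have eig_nonneg : ∀ (X : Fin n → Fin d → ℝ) (i : Fin d), 0 ≤ empCovEig X i := by
    intro X i
    have h1 : ((Matrix.of X)ᵀ * Matrix.of X : Matrix (Fin d) (Fin d) ℝ).PosSemidef := by
      have := Matrix.posSemidef_conjTranspose_mul_self (Matrix.of X)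
      rwa [Matrix.conjTranspose_eq_transpose_of_trivial] at this
    have hps : (empCov X).PosSemidef := by
      exact h1.smul (by positivity)
    exact hps.eigenvalues_nonneg i
  have sum_eig : ∀ X : Fin n → Fin d → ℝ, ∑ i, empCovEig X i = (empCov X).trace := fun X =>
    sum_eig_eq_trace (empCov_isHermitian X)
  -- generic integration step
  have main : ∀ C c : ℝ,
      (∀ X : Fin n → Fin d → ℝ, C + c * ((empCov X).trace - d) ≤ ∑ i, f (empCovEig X i)) →
      C ≤ ∫ X, (∑ i, f (empCovEig X i)) ∂(gaussX n d) := by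
    intro C c hpt
    have hsub : Integrable (fun X : Fin n → Fin d → ℝ => (empCov X).trace - (d:ℝ))
        (gaussX n d) := tr_int.sub (integrable_const _)
    have h2 : Integrable (fun X : Fin n → Fin d → ℝ => c * ((empCov X).trace - (d:ℝ)))
        (gaussX n d) := hsub.const_mul c
    have hrhs_int : Integrable
        (fun X : Fin n → Fin d → ℝ => C + c * ((empCov X).trace - (d:ℝ))) (gaussX n d) :=
      (integrable_const _).add h2
    have h := integral_mono hrhs_int hint hpt
    have heq : (∫ a, ((empCov a).trace - (d:ℝ)) ∂(gaussX n d)) = 0 := by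
      rw [integral_sub tr_int (integrable_const _), tr_intg, integral_const]
      simp
    rw [integral_add (integrable_const C) h2, integral_const, integral_const_mul, heq] at h
    simpa using h
  constructor
  · -- case d ≤ n
    intro hdn
    obtain ⟨c, hc⟩ := convex_subgradient hf 1
    refine main ((d:ℝ) * f 1) c fun X => ?_
    have hsum : ∑ i : Fin d, (f 1 + c * (empCovEig X i - 1))
        = (d:ℝ) * f 1 + c * ((empCov X).trace - d) := by
      rw [Finset.sum_add_distrib, Finset.sum_const, Finset.card_univ, Fintype.card_fin,
        ← Finset.mul_sum, Finset.sum_sub_distrib, Finset.sum_const, Finset.card_univ,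
        Fintype.card_fin, sum_eig X]
      simp [nsmul_eq_mul]
    calc (d:ℝ) * f 1 + c * ((empCov X).trace - d)
        = ∑ i : Fin d, (f 1 + c * (empCovEig X i - 1)) := hsum.symm
      _ ≤ ∑ i, f (empCovEig X i) := Finset.sum_le_sum fun i _ => hc _
  · -- case n < d
    intro hnd
    obtain ⟨c, hc⟩ := convex_subgradient hf ((d:ℝ)/n)
    refine main ((n:ℝ) * f ((d:ℝ)/n) + ((d:ℝ) - n) * f 0) c fun X => ?_
    -- rank bound
    have hrank : (empCov X).rank ≤ n := by
      have h1 : empCov X = ((n:ℝ)⁻¹ • (1 : Matrix (Fin d) (Fin d) ℝ))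
          * ((Matrix.of X)ᵀ * Matrix.of X) := by
        rw [Matrix.smul_mul, Matrix.one_mul]; rfl
      calc (empCov X).rank ≤ ((Matrix.of X)ᵀ * Matrix.of X).rank := by
            rw [h1]; exact Matrix.rank_mul_le_right _ _
        _ ≤ (Matrix.of X).rank := Matrix.rank_mul_le_right _ _
        _ ≤ n := Matrix.rank_le_height _
    have hcard : Fintype.card {i // empCovEig X i ≠ 0} ≤ n :=
      (empCov_isHermitian X).rank_eq_card_non_zero_eigs ▸ hrank
    set Z : Finset (Fin d) := Finset.univ.filter (fun i => empCovEig X i = 0) with hZ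
    have hZcard : d - n ≤ Z.card := by
      have h1 : Z.card + (Finset.univ.filter (fun i => ¬ empCovEig X i = 0)).card
          = Fintype.card (Fin d) := by
        rw [Finset.card_filter_add_card_filter_not, Finset.card_univ]
      have h2 : (Finset.univ.filter (fun i => ¬ empCovEig X i = 0)).card
          = Fintype.card {i // empCovEig X i ≠ 0} := (Fintype.card_subtype _).symm
      rw [Fintype.card_fin] at h1
      omega
    obtain ⟨T, hTZ, hTcard⟩ := Finset.exists_subset_card_eq hZcard
    have hT0 : ∀ i ∈ T, empCovEig X i = 0 := fun i hi => by
      have := hTZ hi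
      rw [hZ, Finset.mem_filter] at this
      exact this.2
    have hTc_card : Tᶜ.card = n := by
      rw [Finset.card_compl, hTcard, Fintype.card_fin]
      omega
    have hsumT : ∑ i ∈ T, f (empCovEig X i) = ((d:ℝ) - n) * f 0 := by
      rw [Finset.sum_congr rfl (fun i hi => by rw [hT0 i hi]), Finset.sum_const, hTcard,
        nsmul_eq_mul, Nat.cast_sub (le_of_lt hnd)]
    have hsumTc : ∑ i ∈ Tᶜ, empCovEig X i = (empCov X).trace := by
      have h0 : ∑ i ∈ T, empCovEig X i = 0 := Finset.sum_eq_zero hT0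
      rw [← sum_eig X, ← Finset.sum_add_sum_compl T (empCovEig X), h0, zero_add]
    have hcompute : ∑ i ∈ Tᶜ, (f ((d:ℝ)/n) + c * (empCovEig X i - (d:ℝ)/n))
        = (n:ℝ) * f ((d:ℝ)/n) + c * ((empCov X).trace - d) := by
      rw [Finset.sum_add_distrib, Finset.sum_const, hTc_card, ← Finset.mul_sum,
        Finset.sum_sub_distrib, Finset.sum_const, hTc_card, hsumTc, nsmul_eq_mul]
      have hnd' : (n:ℝ) * ((d:ℝ)/n) = d := by field_simp
      rw [nsmul_eq_mul, hnd']
    have hineq : ∑ i ∈ Tᶜ, (f ((d:ℝ)/n) + c * (empCovEig X i - (d:ℝ)/n))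
        ≤ ∑ i ∈ Tᶜ, f (empCovEig X i) := Finset.sum_le_sum fun i _ => hc _
    have hsplit : ∑ i ∈ T, f (empCovEig X i) + ∑ i ∈ Tᶜ, f (empCovEig X i)
        = ∑ i, f (empCovEig X i) := Finset.sum_add_sum_compl T _
    linarith [hcompute ▸ hineq]
end

section
/- Fix d ∈ ℕ, a unit vector ŵ* ∈ ℝ^d, r > 0, s ∈ {±1}, and κ > 0. Consider the two-layer linear network population loss ℓ(A, w) = ‖Aᵀ w − s r ŵ*‖² for A ∈ ℝ^{d×d}, w ∈ ℝ^d, and the gradient flow (A(t), w(t)) given by A'(t) = s r w(t) ŵ*ᵀ − w(t) w(t)ᵀ A(t) and w'(t) = s r A(t) ŵ* − A(t) A(t)ᵀ w(t) (the negative gradients of ℓ). If A(0) = (a₀ − κ) ŵ* ŵ*ᵀ + κ I_d and w(0) = b₀ ŵ* with a₀ > b₀ ≥ 0, then as t → ∞ the flow converges to (Ā, w̄) with Ā = (ā − κ) ŵ* ŵ*ᵀ + κ I_d and w̄ = b̄ ŵ*, where c = a₀² − b₀², ā = √((c + √(4r² + c²))/2) and b̄ = s·√((−c + √(4r² + c²))/2).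 -/
/-!
STATEMENT 9: Convergence of gradient flow on the two-layer linear network
population loss `ℓ(A, w) = ‖Aᵀ w − s r ŵ*‖²`, started from a spiked-identity
first layer and a second layer aligned with the unit vector `ŵ*`.
-/

open Matrix Filter Topology Real

set_option maxHeartbeats 1000000 in
theorem scalar_flow_exists (r s a0 b0 : ℝ) (hr : 0 < r) (hs : s = 1 ∨ s = -1)
    (hab : b0 < a0) (hb0 : 0 ≤ b0) :
    ∃ a b : ℝ → ℝ, a 0 = a0 ∧ b 0 = b0 ∧
      (∀ t ∈ Set.Ici (0:ℝ), HasDerivAt a (b t * (s * r - a t * b t)) t) ∧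
      (∀ t ∈ Set.Ici (0:ℝ), HasDerivAt b (a t * (s * r - a t * b t)) t) ∧
      Tendsto a atTop (𝓝 (Real.sqrt (((a0 ^ 2 - b0 ^ 2) +
        Real.sqrt (4 * r ^ 2 + (a0 ^ 2 - b0 ^ 2) ^ 2)) / 2))) ∧
      Tendsto b atTop (𝓝 (s * Real.sqrt ((-(a0 ^ 2 - b0 ^ 2) +
        Real.sqrt (4 * r ^ 2 + (a0 ^ 2 - b0 ^ 2) ^ 2)) / 2))) := by
  have hs1 : -1 ≤ s := by rcases hs with rfl | rfl <;> norm_num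
  have hs1' : s ≤ 1 := by rcases hs with rfl | rfl <;> norm_num
  have hs2 : s ^ 2 = 1 := by rcases hs with rfl | rfl <;> norm_num
  set c : ℝ := a0 ^ 2 - b0 ^ 2 with hc_def
  have hc : 0 < c := by nlinarith
  set D : ℝ := Real.sqrt (4 * r ^ 2 + c ^ 2) with hD_def
  have hD2 : D ^ 2 = 4 * r ^ 2 + c ^ 2 := Real.sq_sqrt (by positivity)
  have hDpos : 0 < D := Real.sqrt_pos.2 (by positivity)
  have hD2r : 2 * r < D := by nlinarith
  set zp : ℝ := 2 * s * r + D with hzp_def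
  set zm : ℝ := 2 * s * r - D with hzm_def
  have hzppos : 0 < zp := by nlinarith
  have hzmneg : zm < 0 := by nlinarith
  set z0 : ℝ := (a0 + b0) ^ 2 with hz0_def
  have hab0 : 0 < a0 + b0 := by linarith
  have hz0pos : 0 < z0 := by positivity
  have hz0m : 0 < z0 - zm := by linarith
  set w0 : ℝ := (z0 - zp) / (z0 - zm) with hw0_def
  have hw0lt : w0 < 1 := by
    rw [hw0_def, div_lt_one hz0m]; linarith
  have hkey : 0 < zp - zm * w0 := by
    have : zp - zm * w0 = z0 * (zp - zm) / (z0 - zm) := by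
      rw [hw0_def]; field_simp; ring
    rw [this]
    exact div_pos (mul_pos hz0pos (by linarith : (0:ℝ) < zp - zm)) hz0m
  -- the solution of the logistic-type equation
  set W : ℝ → ℝ := fun t => w0 * Real.exp (-D * t) with hW_def
  set z : ℝ → ℝ := fun t => (zp - zm * W t) / (1 - W t) with hz_def
  have hWfacts : ∀ t : ℝ, 0 ≤ t → 0 < 1 - W t ∧ 0 < zp - zm * W t := by
    intro t ht
    have he0 : 0 < Real.exp (-D * t) := Real.exp_pos _
    have he1 : Real.exp (-D * t) ≤ 1 :=
      Real.exp_le_one_iff.2 (by nlinarith)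
    constructor
    · have : 1 - W t = (1 - Real.exp (-D * t)) * 1 + Real.exp (-D * t) * (1 - w0) := by
        rw [hW_def]; ring
      rw [this]; nlinarith
    · have : zp - zm * W t = (1 - Real.exp (-D * t)) * zp + Real.exp (-D * t) * (zp - zm * w0) := by
        rw [hW_def]; ring
      rw [this]; nlinarith
  have hzpos : ∀ t : ℝ, 0 ≤ t → 0 < z t := fun t ht =>
    div_pos (hWfacts t ht).2 (hWfacts t ht).1
  have hW0 : W 0 = w0 := by simp [hW_def]
  have hz00 : z 0 = z0 := by
    have h1 : (0:ℝ) < 1 - w0 := by linarith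
    rw [hz_def]; simp only [hW0]
    rw [div_eq_iff (by linarith : (1:ℝ) - w0 ≠ 0), hw0_def]
    field_simp
    ring
  clear_value c D zp zm z0 w0 W z
  -- derivative of z
  have hzderiv : ∀ t : ℝ, 0 ≤ t →
      HasDerivAt z ((4 * s * r * z t - (z t) ^ 2 + c ^ 2) / 2) t := by
    intro t ht
    obtain ⟨hden, hnum⟩ := hWfacts t ht
    have hlin : HasDerivAt (fun u : ℝ => -D * u) (-D) t := by
      simpa using (hasDerivAt_id t).const_mul (-D)
    have hexp : HasDerivAt (fun u : ℝ => Real.exp (-D * u)) (Real.exp (-D * t) * -D) t :=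
      (Real.hasDerivAt_exp (-D * t)).comp t hlin
    have hW' : HasDerivAt W (w0 * (Real.exp (-D * t) * -D)) t := by
      rw [hW_def]; exact hexp.const_mul w0
    have hnum' : HasDerivAt (fun u => zp - zm * W u) (-(zm * (w0 * (Real.exp (-D * t) * -D)))) t :=
      (hW'.const_mul zm).const_sub zp
    have hden' : HasDerivAt (fun u => 1 - W u) (-(w0 * (Real.exp (-D * t) * -D))) t :=
      hW'.const_sub 1
    have hdiv := hnum'.div hden' (ne_of_gt hden)
    have hzt_eq : z t = (zp - zm * W t) / (1 - W t) := by rw [hz_def]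
    have hstep : HasDerivAt z (-(z t - zp) * (z t - zm) / 2) t := by
      have heq : -(z t - zp) * (z t - zm) / 2
          = (-(zm * (w0 * (Real.exp (-D * t) * -D))) * (1 - W t)
              - (zp - zm * W t) * -(w0 * (Real.exp (-D * t) * -D))) / (1 - W t) ^ 2 := by
        have hE : w0 * (Real.exp (-D * t) * -D) = -D * W t := by rw [hW_def]; ring
        have h2 : zp = zm + 2 * D := by rw [hzp_def, hzm_def]; ring
        rw [hzt_eq, hE, h2]
        have hW1 : (1:ℝ) - W t ≠ 0 := ne_of_gt hden
        field_simp
        ring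
      rw [heq, hz_def]
      exact hdiv
    convert hstep using 1
    simp only [hzp_def, hzm_def]
    linear_combination (-(1:ℝ)/2) * hD2 + 2 * r ^ 2 * hs2
  refine ⟨fun t => (z t + c) / (2 * Real.sqrt (z t)),
          fun t => (z t - c) / (2 * Real.sqrt (z t)), ?_, ?_, ?_, ?_, ?_, ?_⟩
  · show (z 0 + c) / (2 * Real.sqrt (z 0)) = a0
    rw [hz00, hz0_def, Real.sqrt_sq hab0.le, hc_def]
    field_simp
    ring
  · show (z 0 - c) / (2 * Real.sqrt (z 0)) = b0
    rw [hz00, hz0_def, Real.sqrt_sq hab0.le, hc_def]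
    field_simp
    ring
  · intro t ht
    rw [Set.mem_Ici] at ht
    have hzt := hzpos t ht
    have hx : 0 < Real.sqrt (z t) := Real.sqrt_pos.2 hzt
    have hz' := hzderiv t ht
    have hsq : HasDerivAt (fun u => Real.sqrt (z u))
        (1 / (2 * Real.sqrt (z t)) * ((4 * s * r * z t - (z t) ^ 2 + c ^ 2) / 2)) t :=
      (Real.hasDerivAt_sqrt (ne_of_gt hzt)).comp t hz'
    have hdiv := (hz'.add_const c).div (hsq.const_mul 2) (by positivity)
    refine hdiv.congr_deriv ?_
    beta_reduce
    generalize hxg : Real.sqrt (z t) = x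
    have hxpos : 0 < x := hxg ▸ hx
    rw [show z t = x ^ 2 from by rw [← hxg]; exact (Real.sq_sqrt hzt.le).symm]
    field_simp
    ring
  · intro t ht
    rw [Set.mem_Ici] at ht
    have hzt := hzpos t ht
    have hx : 0 < Real.sqrt (z t) := Real.sqrt_pos.2 hzt
    have hz' := hzderiv t ht
    have hsq : HasDerivAt (fun u => Real.sqrt (z u))
        (1 / (2 * Real.sqrt (z t)) * ((4 * s * r * z t - (z t) ^ 2 + c ^ 2) / 2)) t :=
      (Real.hasDerivAt_sqrt (ne_of_gt hzt)).comp t hz'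
    have hdiv := (hz'.sub_const c).div (hsq.const_mul 2) (by positivity)
    refine hdiv.congr_deriv ?_
    beta_reduce
    generalize hxg : Real.sqrt (z t) = x
    have hxpos : 0 < x := hxg ▸ hx
    rw [show z t = x ^ 2 from by rw [← hxg]; exact (Real.sq_sqrt hzt.le).symm]
    field_simp
    ring
  all_goals {
    have hDt : Tendsto (fun t : ℝ => D * t) atTop atTop :=
      Tendsto.const_mul_atTop hDpos tendsto_id
    have hexp0 : Tendsto (fun t : ℝ => Real.exp (-D * t)) atTop (𝓝 0) := by
      have := Real.tendsto_exp_neg_atTop_nhds_zero.comp hDt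
      refine this.congr fun t => ?_
      simp [neg_mul, Function.comp]
    have hWlim : Tendsto W atTop (𝓝 0) := by
      rw [hW_def]
      simpa using hexp0.const_mul w0
    have hzlim : Tendsto z atTop (𝓝 zp) := by
      rw [hz_def]
      have h1 : Tendsto (fun t => zp - zm * W t) atTop (𝓝 (zp - zm * 0)) :=
        tendsto_const_nhds.sub (hWlim.const_mul zm)
      have h2 : Tendsto (fun t => 1 - W t) atTop (𝓝 (1 - 0)) :=
        tendsto_const_nhds.sub hWlim
      have := h1.div h2 (by norm_num)
      simpa [Pi.div_def] using this
    have hq : 0 < Real.sqrt zp := Real.sqrt_pos.2 hzppos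
    have hsqlim : Tendsto (fun t => Real.sqrt (z t)) atTop (𝓝 (Real.sqrt zp)) :=
      (Real.continuous_sqrt.tendsto zp).comp hzlim
    first
    | · -- limit of a
        have key : (zp + c) ^ 2 = 2 * zp * (c + D) := by
          rw [hzp_def]; linear_combination (-1 : ℝ) * hD2 + 4 * r ^ 2 * hs2
        have habar : Real.sqrt ((c + D) / 2) = (zp + c) / (2 * Real.sqrt zp) := by
          have h4 : (c + D) / 2 = ((zp + c) / (2 * Real.sqrt zp)) ^ 2 := by
            rw [div_pow, mul_pow, Real.sq_sqrt hzppos.le, eq_div_iff (by positivity)]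
            linear_combination (-1 : ℝ) * key
          rw [h4, Real.sqrt_sq (by positivity)]
        rw [habar]
        exact (hzlim.add_const c).div (hsqlim.const_mul 2) (by positivity)
    | · -- limit of b
        have key2 : (zp - c) ^ 2 = 2 * zp * (D - c) := by
          rw [hzp_def]; linear_combination (-1 : ℝ) * hD2 + 4 * r ^ 2 * hs2
        have hDc : c ≤ D := by nlinarith [hD2, mul_pos hr hr, hDpos, hc]
        have hDc2 : D ≤ 2 * r + c := by nlinarith [hD2, mul_pos hr hc, hDpos, hc, hr]
        have haux : (0:ℝ) ≤ (1 + s) * (D - c) :=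
          mul_nonneg (by linarith) (by linarith)
        have hss : s ^ 2 * r = r := by rw [hs2]; ring
        have hsgn : 0 ≤ s * (zp - c) := by
          rw [hzp_def]; nlinarith [haux, hss, hDc2]
        have hbbar : s * Real.sqrt ((-c + D) / 2) = (zp - c) / (2 * Real.sqrt zp) := by
          have h4 : (-c + D) / 2 = (s * ((zp - c) / (2 * Real.sqrt zp))) ^ 2 := by
            rw [mul_pow, hs2, one_mul, div_pow, mul_pow, Real.sq_sqrt hzppos.le,
              eq_div_iff (by positivity)]
            linear_combination (-1 : ℝ) * key2
          have h5 : 0 ≤ s * ((zp - c) / (2 * Real.sqrt zp)) := by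
            have heq5 : s * ((zp - c) / (2 * Real.sqrt zp))
                = (s * (zp - c)) / (2 * Real.sqrt zp) := by ring
            rw [heq5]
            exact div_nonneg hsgn (by positivity)
          rw [h4, Real.sqrt_sq h5, ← mul_assoc,
            show s * s = 1 from by nlinarith [hs2], one_mul]
        rw [hbbar]
        exact (hzlim.sub_const c).div (hsqlim.const_mul 2) (by positivity) }

/-- The gradient-flow vector field for the two-layer linear network, on the
product state space `(Fin d → Fin d → ℝ) × (Fin d → ℝ)`. -/
def flowField (d : ℕ) (s r : ℝ) (what : Fin d → ℝ) :
    ((Fin d → Fin d → ℝ) × (Fin d → ℝ)) → ((Fin d → Fin d → ℝ) × (Fin d → ℝ)) :=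
  fun p => (fun i j => s * r * (p.2 i * what j) - ∑ k, (p.2 i * p.2 k) * p.1 k j,
            fun i => s * r * (∑ j, p.1 i j * what j) - ∑ j, (∑ k, p.1 i k * p.1 j k) * p.2 j)

lemma flowField_contDiff (d : ℕ) (s r : ℝ) (what : Fin d → ℝ) :
    ContDiff ℝ 1 (flowField d s r what) := by
  have h1 : ∀ (i j : Fin d), ContDiff ℝ 1
      (fun p : (Fin d → Fin d → ℝ) × (Fin d → ℝ) => p.1 i j) := fun i j => by
    exact ContDiff.comp (ContinuousLinearMap.contDiff
        (ContinuousLinearMap.proj (R := ℝ) (φ := fun _ : Fin d => ℝ) j))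
      (ContDiff.comp (ContinuousLinearMap.contDiff
        (ContinuousLinearMap.proj (R := ℝ) (φ := fun _ : Fin d => Fin d → ℝ) i)) contDiff_fst)
  have h2 : ∀ (i : Fin d), ContDiff ℝ 1
      (fun p : (Fin d → Fin d → ℝ) × (Fin d → ℝ) => p.2 i) := fun i => by
    exact ContDiff.comp (ContinuousLinearMap.contDiff
        (ContinuousLinearMap.proj (R := ℝ) (φ := fun _ : Fin d => ℝ) i)) contDiff_snd
  unfold flowField
  apply ContDiff.prodMk
  · rw [contDiff_pi]; intro i; rw [contDiff_pi]; intro j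
    exact (contDiff_const.mul ((h2 i).mul contDiff_const)).sub
      (ContDiff.sum fun k _ => ((h2 i).mul (h2 k)).mul (h1 k j))
  · rw [contDiff_pi]; intro i
    exact (contDiff_const.mul (ContDiff.sum fun j _ => (h1 i j).mul contDiff_const)).sub
      (ContDiff.sum fun j _ => (ContDiff.sum fun k _ => (h1 i k).mul (h1 j k)).mul (h2 j))

def XX (d : ℕ) (A : ℝ → Matrix (Fin d) (Fin d) ℝ) (w : ℝ → Fin d → ℝ) :
    ℝ → ((Fin d → Fin d → ℝ) × (Fin d → ℝ)) :=
  fun t => (fun i j => A t i j, fun i => w t i)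

def YY (d : ℕ) (κ : ℝ) (what : Fin d → ℝ) (a b : ℝ → ℝ) :
    ℝ → ((Fin d → Fin d → ℝ) × (Fin d → ℝ)) :=
  fun t => (fun i j => (a t - κ) * (what i * what j) + (if i = j then κ else 0),
            fun i => b t * what i)

open Matrix in
set_option maxHeartbeats 1000000 in
theorem two_layer_gradient_flow_limit
    (d : ℕ) (hd : 1 ≤ d) (what : Fin d → ℝ) (hunit : ∑ i, (what i) ^ 2 = 1)
    (r : ℝ) (hr : 0 < r) (s : ℝ) (hs : s = 1 ∨ s = -1)
    (κ : ℝ) (hκ : 0 < κ) (a0 b0 : ℝ) (hab : b0 < a0) (hb0 : 0 ≤ b0)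
    (A : ℝ → Matrix (Fin d) (Fin d) ℝ) (w : ℝ → Fin d → ℝ)
    (hA0 : A 0 = (a0 - κ) • vecMulVec what what + κ • (1 : Matrix (Fin d) (Fin d) ℝ))
    (hw0 : w 0 = b0 • what)
    (hodeA : ∀ t ∈ Set.Ici (0 : ℝ), ∀ i j,
      HasDerivWithinAt (fun u => A u i j)
        (((s * r) • vecMulVec (w t) what - vecMulVec (w t) (w t) * A t) i j)
        (Set.Ici 0) t)
    (hodew : ∀ t ∈ Set.Ici (0 : ℝ), ∀ i,
      HasDerivWithinAt (fun u => w u i)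
        (((s * r) • (A t).mulVec what - (A t * (A t)ᵀ).mulVec (w t)) i)
        (Set.Ici 0) t) :
    (∀ i j, Tendsto (fun t => A t i j) atTop
      (𝓝 (((Real.sqrt (((a0 ^ 2 - b0 ^ 2) + Real.sqrt (4 * r ^ 2 + (a0 ^ 2 - b0 ^ 2) ^ 2)) / 2)
              - κ) • vecMulVec what what + κ • (1 : Matrix (Fin d) (Fin d) ℝ)) i j))) ∧
    (∀ i, Tendsto (fun t => w t i) atTop
      (𝓝 ((s * Real.sqrt ((-(a0 ^ 2 - b0 ^ 2)
              + Real.sqrt (4 * r ^ 2 + (a0 ^ 2 - b0 ^ 2) ^ 2)) / 2)) * what i))) := by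
  obtain ⟨a, b, ha00, hb00, haD, hbD, halim, hblim⟩ :=
    scalar_flow_exists r s a0 b0 hr hs hab hb0
  have hXode : ∀ t ∈ Set.Ici (0:ℝ), HasDerivWithinAt (XX d A w)
      (flowField d s r what (XX d A w t)) (Set.Ici 0) t := by
    intro t ht
    apply HasDerivWithinAt.prodMk
    · rw [hasDerivWithinAt_pi]; intro i; rw [hasDerivWithinAt_pi]; intro j
      exact hodeA t ht i j
    · rw [hasDerivWithinAt_pi]; intro i
      exact hodew t ht i
  have hYode : ∀ t ∈ Set.Ici (0:ℝ), HasDerivWithinAt (YY d κ what a b)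
      (flowField d s r what (YY d κ what a b t)) (Set.Ici 0) t := by
    intro t ht
    apply HasDerivWithinAt.prodMk
    · rw [hasDerivWithinAt_pi]; intro i; rw [hasDerivWithinAt_pi]; intro j
      have h1 : HasDerivAt (fun u => (a u - κ) * (what i * what j) + (if i = j then κ else 0))
          ((b t * (s * r - a t * b t)) * (what i * what j)) t :=
        (((haD t ht).sub_const κ).mul_const _).add_const _
      convert h1.hasDerivWithinAt using 1
      show (flowField d s r what (YY d κ what a b t)).1 i j = _
      simp only [flowField, YY]
      have hterm : ∀ k : Fin d, b t * what i * (b t * what k) *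
          ((a t - κ) * (what k * what j) + (if k = j then κ else 0))
          = (b t * b t * (a t - κ) * (what i * what j)) * (what k) ^ 2
            + (if k = j then (b t * b t * κ * what i) * what k else 0) := by
        intro k
        by_cases hkj : k = j
        · subst hkj; simp; ring
        · simp [hkj]; ring
      rw [Finset.sum_congr rfl fun k _ => hterm k, Finset.sum_add_distrib, ← Finset.mul_sum,
        hunit, Finset.sum_ite_eq' Finset.univ j]
      simp only [Finset.mem_univ, if_true]
      ring
    · rw [hasDerivWithinAt_pi]; intro i
      have h1 : HasDerivAt (fun u => b u * what i) ((a t * (s * r - a t * b t)) * what i) t :=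
        (hbD t ht).mul_const _
      convert h1.hasDerivWithinAt using 1
      show (flowField d s r what (YY d κ what a b t)).2 i = _
      simp only [flowField, YY]
      have hsumA : ∑ j, ((a t - κ) * (what i * what j) + (if i = j then κ else 0)) * what j
          = a t * what i := by
        have hterm : ∀ j : Fin d, ((a t - κ) * (what i * what j) + (if i = j then κ else 0)) * what j
            = ((a t - κ) * what i) * (what j) ^ 2 + (if i = j then κ * what j else 0) := by
          intro j
          by_cases hij : i = j
          · subst hij; simp; ring
          · simp [hij]; ring
        rw [Finset.sum_congr rfl fun j _ => hterm j, Finset.sum_add_distrib, ← Finset.mul_sum,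
          hunit, Finset.sum_ite_eq Finset.univ i]
        simp only [Finset.mem_univ, if_true]
        ring
      have hsumB : ∀ j : Fin d, (∑ k, ((a t - κ) * (what i * what k) + (if i = k then κ else 0))
            * ((a t - κ) * (what j * what k) + (if j = k then κ else 0)))
          = (a t * a t - κ * κ) * (what i * what j) + (if i = j then κ * κ else 0) := by
        intro j
        have hterm : ∀ k : Fin d, ((a t - κ) * (what i * what k) + (if i = k then κ else 0))
              * ((a t - κ) * (what j * what k) + (if j = k then κ else 0))
            = ((a t - κ) * (a t - κ) * (what i * what j)) * (what k) ^ 2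
              + ((if j = k then ((a t - κ) * κ * what i) * what k else 0)
              + ((if i = k then ((a t - κ) * κ * what j) * what k else 0)
              + (if i = k then (if i = j then κ * κ else 0) else 0))) := by
          intro k
          by_cases h1 : i = k <;> by_cases h2 : j = k <;>
            simp [h1, h2, eq_comm] <;> ring
        rw [Finset.sum_congr rfl fun k _ => hterm k, Finset.sum_add_distrib, ← Finset.mul_sum,
          hunit, Finset.sum_add_distrib, Finset.sum_ite_eq Finset.univ j,
          Finset.sum_add_distrib, Finset.sum_ite_eq Finset.univ i, Finset.sum_ite_eq Finset.univ i]
        simp only [Finset.mem_univ, if_true]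
        ring_nf
      have hsumC : ∑ j, ((a t * a t - κ * κ) * (what i * what j) + (if i = j then κ * κ else 0))
            * (b t * what j) = a t * a t * b t * what i := by
        have hterm : ∀ j : Fin d, ((a t * a t - κ * κ) * (what i * what j)
              + (if i = j then κ * κ else 0)) * (b t * what j)
            = ((a t * a t - κ * κ) * what i * b t) * (what j) ^ 2
              + (if i = j then (κ * κ * b t) * what j else 0) := by
          intro j
          by_cases hij : i = j
          · subst hij; simp; ring
          · simp [hij]; ring
        rw [Finset.sum_congr rfl fun j _ => hterm j, Finset.sum_add_distrib, ← Finset.mul_sum,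
          hunit, Finset.sum_ite_eq Finset.univ i]
        simp only [Finset.mem_univ, if_true]
        ring
      rw [hsumA, Finset.sum_congr rfl fun j _ => by rw [hsumB j], hsumC]
      ring
  have hinit : XX d A w 0 = YY d κ what a b 0 := by
    unfold XX YY
    rw [hA0, hw0]
    refine Prod.ext ?_ ?_
    · funext i j
      simp [Matrix.add_apply, Matrix.smul_apply, Matrix.vecMulVec_apply, Matrix.one_apply,
        smul_eq_mul, mul_ite, mul_one, mul_zero, ha00]
    · funext i
      simp [hb00, Pi.smul_apply, smul_eq_mul]
  have hEq : ∀ t : ℝ, 0 ≤ t → XX d A w t = YY d κ what a b t := by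
    intro T hT
    have hXc : ContinuousOn (XX d A w) (Set.Icc 0 T) := fun u hu =>
      ((hXode u hu.1).continuousWithinAt).mono (fun x hx => hx.1)
    have hYc : ContinuousOn (YY d κ what a b) (Set.Icc 0 T) := fun u hu =>
      ((hYode u hu.1).continuousWithinAt).mono (fun x hx => hx.1)
    obtain ⟨C1, hC1⟩ := (isCompact_Icc (a := (0:ℝ)) (b := T)).exists_bound_of_continuousOn hXc
    obtain ⟨C2, hC2⟩ := (isCompact_Icc (a := (0:ℝ)) (b := T)).exists_bound_of_continuousOn hYc
    set R := max C1 C2 with hR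
    have hfd : Continuous (fun p => fderiv ℝ (flowField d s r what) p) :=
      (flowField_contDiff d s r what).continuous_fderiv one_ne_zero
    obtain ⟨C, hC⟩ := (isCompact_closedBall
      (0 : (Fin d → Fin d → ℝ) × (Fin d → ℝ)) R).exists_bound_of_continuousOn hfd.continuousOn
    have hlip : ∀ u : ℝ, LipschitzOnWith C.toNNReal (flowField d s r what)
        (Metric.closedBall 0 R) := by
      intro u
      apply Convex.lipschitzOnWith_of_nnnorm_fderiv_le
        (fun x _ => ((flowField_contDiff d s r what).differentiable one_ne_zero).differentiableAt)
        ?_ (convex_closedBall _ _)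
      intro x hx
      rw [← NNReal.coe_le_coe, coe_nnnorm, Real.coe_toNNReal']
      exact le_trans (hC x hx) (le_max_left _ _)
    have hmemX : ∀ u ∈ Set.Ico (0:ℝ) T, XX d A w u ∈ Metric.closedBall (0 : _) R := fun u hu =>
      mem_closedBall_zero_iff.2 (le_trans (hC1 u ⟨hu.1, hu.2.le⟩) (le_max_left _ _))
    have hmemY : ∀ u ∈ Set.Ico (0:ℝ) T, YY d κ what a b u ∈ Metric.closedBall (0 : _) R :=
      fun u hu =>
      mem_closedBall_zero_iff.2 (le_trans (hC2 u ⟨hu.1, hu.2.le⟩) (le_max_right _ _))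
    have := ODE_solution_unique_of_mem_Icc_right
      (v := fun _ p => flowField d s r what p) (s := fun _ => Metric.closedBall 0 R)
      (fun u _ => hlip u) hXc
      (fun u hu => (hXode u hu.1).mono (Set.Ici_subset_Ici.2 hu.1)) hmemX
      hYc (fun u hu => (hYode u hu.1).mono (Set.Ici_subset_Ici.2 hu.1)) hmemY hinit
    exact this ⟨hT, le_rfl⟩
  constructor
  · intro i j
    have hcomp : ∀ t : ℝ, 0 ≤ t →
        A t i j = (a t - κ) * (what i * what j) + (if i = j then κ else 0) := by
      intro t ht
      have h := congrFun (congrFun (congrArg Prod.fst (hEq t ht)) i) j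
      simpa [XX, YY] using h
    have hlim2 := ((halim.sub_const κ).mul_const (what i * what j)).add_const
      (if i = j then κ else 0)
    have hfin : Tendsto (fun t => A t i j) atTop
        (𝓝 ((Real.sqrt (((a0 ^ 2 - b0 ^ 2) + Real.sqrt (4 * r ^ 2 + (a0 ^ 2 - b0 ^ 2) ^ 2)) / 2)
          - κ) * (what i * what j) + (if i = j then κ else 0))) := by
      refine hlim2.congr' ?_
      filter_upwards [eventually_ge_atTop (0:ℝ)] with t ht
      exact (hcomp t ht).symm
    have htarget : ((Real.sqrt (((a0 ^ 2 - b0 ^ 2)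
          + Real.sqrt (4 * r ^ 2 + (a0 ^ 2 - b0 ^ 2) ^ 2)) / 2) - κ) • vecMulVec what what
          + κ • (1 : Matrix (Fin d) (Fin d) ℝ)) i j
        = (Real.sqrt (((a0 ^ 2 - b0 ^ 2) + Real.sqrt (4 * r ^ 2 + (a0 ^ 2 - b0 ^ 2) ^ 2)) / 2)
          - κ) * (what i * what j) + (if i = j then κ else 0) := by
      simp [Matrix.add_apply, Matrix.smul_apply, Matrix.vecMulVec_apply, Matrix.one_apply,
        smul_eq_mul, mul_ite, mul_one, mul_zero]
    rw [htarget]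
    exact hfin
  · intro i
    have hcomp : ∀ t : ℝ, 0 ≤ t → w t i = b t * what i := by
      intro t ht
      have h := congrFun (congrArg Prod.snd (hEq t ht)) i
      simpa [XX, YY] using h
    have hlim2 := hblim.mul_const (what i)
    refine hlim2.congr' ?_
    filter_upwards [eventually_ge_atTop (0:ℝ)] with t ht
    exact (hcomp t ht).symm
end

section
/- Fix r > 0 and s ∈ {±1}, and consider the planar ODE a'(t) = s r b(t) − b(t)² a(t), b'(t) = s r a(t) − a(t)² b(t). Along any solution, the quantity a(t)² − b(t)² is constant in t; moreover, if a(0) > b(0) ≥ 0 and c = a(0)² − b(0)², then (a(t), b(t)) converges as t → ∞ to the fixed point (ā, b̄) with ā = √((c + √(4r² + c²))/2) and b̄ = s·√((−c + √(4r² + c²))/2), which satisfies ā b̄ = s r and ā² − b̄² = c. -/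
/-!
STATEMENT 10: The planar gradient-flow reduction `a' = s r b − b² a`,
`b' = s r a − a² b`: conservation of `a² − b²` and convergence to the
explicit fixed point when `a(0) > b(0) ≥ 0`.
-/

open Filter Topology

section PlanarAux
open Set

/-- Scalar autonomous ODE: if `f > 0` left of `β`, `f β = 0`, `f < 0` right of `β`,
and `b 0 ≤ β`, then `b → β`. -/
lemma tendsto_of_start_le
    (f : ℝ → ℝ) (hf : Continuous f) (β : ℝ) (hfβ : f β = 0)
    (hpos : ∀ x, x < β → 0 < f x) (hneg : ∀ x, β < x → f x < 0)
    (b : ℝ → ℝ)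
    (hb : ∀ t ∈ Set.Ici (0:ℝ), HasDerivWithinAt b (f (b t)) (Set.Ici 0) t)
    (h0 : b 0 ≤ β) : Tendsto b atTop (𝓝 β) := by
  have hcont : ContinuousOn b (Ici 0) := fun t ht => (hb t ht).continuousWithinAt
  have hDA : ∀ t : ℝ, 0 < t → HasDerivAt b (f (b t)) t := fun t ht =>
    (hb t (le_of_lt ht)).hasDerivAt (Ici_mem_nhds ht)
  -- barrier: b stays ≤ β
  have hle : ∀ t ∈ Ici (0:ℝ), b t ≤ β := by
    intro t1 ht1
    by_contra hgt
    push_neg at hgt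
    have ht1pos : 0 < t1 := by
      rcases (Set.mem_Ici.1 ht1).lt_or_eq with h | h
      · exact h
      · exact absurd (h ▸ h0) (not_le.2 hgt)
    set S := Icc (0:ℝ) t1 ∩ b ⁻¹' Iic β with hSdef
    have hScl : IsClosed S :=
      (hcont.mono Icc_subset_Ici_self).preimage_isClosed_of_isClosed isClosed_Icc isClosed_Iic
    have hSne : S.Nonempty := ⟨0, ⟨le_refl 0, le_of_lt ht1pos⟩, h0⟩
    have hSbdd : BddAbove S := ⟨t1, fun x hx => hx.1.2⟩
    set t0 := sSup S with ht0def
    have ht0S : t0 ∈ S := hScl.csSup_mem hSne hSbdd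
    have ht0nn : 0 ≤ t0 := ht0S.1.1
    have ht0lt : t0 < t1 := lt_of_le_of_ne ht0S.1.2
      (fun h => absurd (h ▸ ht0S.2) (not_le.2 hgt))
    have hmid : ∀ t ∈ Ioc t0 t1, β < b t := by
      intro t ht
      by_contra hle'
      push_neg at hle'
      have : t ∈ S := ⟨⟨le_trans ht0nn ht.1.le, ht.2⟩, hle'⟩
      exact absurd (le_csSup hSbdd this) (not_le.2 ht.1)
    have hanti : StrictAntiOn b (Icc t0 t1) := by
      apply strictAntiOn_of_deriv_neg (convex_Icc _ _)
        (hcont.mono (fun x hx => le_trans ht0nn hx.1))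
      intro t ht
      rw [interior_Icc] at ht
      have htpos : 0 < t := lt_of_le_of_lt ht0nn ht.1
      rw [(hDA t htpos).deriv]
      exact hneg _ (hmid t ⟨ht.1, ht.2.le⟩)
    have hlt := hanti (left_mem_Icc.2 ht0lt.le) (right_mem_Icc.2 ht0lt.le) ht0lt
    exact absurd hgt (not_lt.2 (le_trans hlt.le ht0S.2))
  -- monotone
  have hmono : MonotoneOn b (Ici 0) := by
    apply monotoneOn_of_deriv_nonneg (convex_Ici 0) hcont
    · intro t ht; rw [interior_Ici] at ht
      exact (hDA t ht).differentiableAt.differentiableWithinAt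
    · intro t ht; rw [interior_Ici] at ht
      rw [(hDA t ht).deriv]
      rcases lt_or_eq_of_le (hle t (Set.mem_Ici.2 ht.le)) with h | h
      · exact (hpos _ h).le
      · rw [h, hfβ]
  set L := sSup (b '' Ici 0) with hLdef
  have hbdd : BddAbove (b '' Ici 0) := ⟨β, by rintro x ⟨t, ht, rfl⟩; exact hle t ht⟩
  have hne : (b '' Ici 0).Nonempty := ⟨b 0, 0, self_mem_Ici, rfl⟩
  have hbL : ∀ t ∈ Ici (0:ℝ), b t ≤ L := fun t ht => le_csSup hbdd ⟨t, ht, rfl⟩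
  have hLβ : L ≤ β := csSup_le hne (by rintro x ⟨t, ht, rfl⟩; exact hle t ht)
  have htend : Tendsto b atTop (𝓝 L) := by
    rw [tendsto_order]
    constructor
    · intro x hx
      obtain ⟨y, ⟨t0, ht0, rfl⟩, hy⟩ := exists_lt_of_lt_csSup hne hx
      filter_upwards [eventually_ge_atTop t0, eventually_ge_atTop (0:ℝ)] with t ht htn
      exact lt_of_lt_of_le hy (hmono ht0 htn ht)
    · intro x hx
      filter_upwards [eventually_ge_atTop (0:ℝ)] with t ht
      exact lt_of_le_of_lt (hbL t ht) hx
  have hLeq : L = β := by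
    by_contra hne'
    have hLlt : L < β := lt_of_le_of_ne hLβ hne'
    have hb0L : b 0 ≤ L := hbL 0 self_mem_Ici
    obtain ⟨x0, hx0, hmin⟩ :=
      isCompact_Icc.exists_isMinOn (nonempty_Icc.2 hb0L) hf.continuousOn
    have hε : 0 < f x0 := hpos _ (lt_of_le_of_lt hx0.2 hLlt)
    have hg : MonotoneOn (fun t => b t - f x0 * t) (Ici 0) := by
      apply monotoneOn_of_deriv_nonneg (convex_Ici 0)
        (hcont.sub (continuous_const.mul continuous_id').continuousOn)
      · intro t ht; rw [interior_Ici] at ht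
        exact ((hDA t ht).sub ((hasDerivAt_id t).const_mul (f x0))).differentiableAt.differentiableWithinAt
      · intro t ht; rw [interior_Ici] at ht
        have hd : HasDerivAt (fun t => b t - f x0 * t) (f (b t) - f x0 * 1) t :=
          (hDA t ht).sub ((hasDerivAt_id t).const_mul (f x0))
        rw [show deriv (b - (fun x => f x0) * fun x => x) t = f (b t) - f x0 * 1 from hd.deriv]
        have hmem : b t ∈ Icc (b 0) L := ⟨hmono self_mem_Ici (Set.mem_Ici.2 ht.le) ht.le, hbL t (Set.mem_Ici.2 ht.le)⟩
        have := isMinOn_iff.1 hmin _ hmem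
        linarith
    have hT : (0:ℝ) ≤ (L - b 0) / f x0 + 1 := by
      have : 0 ≤ (L - b 0) / f x0 := div_nonneg (by linarith) hε.le
      linarith
    have hgT := hg self_mem_Ici hT hT
    simp only [mul_zero, sub_zero] at hgT
    have hεT : f x0 * ((L - b 0) / f x0 + 1) = (L - b 0) + f x0 := by
      field_simp
    have := hbL _ hT
    nlinarith
  rw [← hLeq]; exact htend

/-- Scalar autonomous ODE, no assumption on starting point. -/
lemma tendsto_scalar_ode
    (f : ℝ → ℝ) (hf : Continuous f) (β : ℝ) (hfβ : f β = 0)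
    (hpos : ∀ x, x < β → 0 < f x) (hneg : ∀ x, β < x → f x < 0)
    (b : ℝ → ℝ)
    (hb : ∀ t ∈ Set.Ici (0:ℝ), HasDerivWithinAt b (f (b t)) (Set.Ici 0) t) :
    Tendsto b atTop (𝓝 β) := by
  rcases le_or_gt (b 0) β with h | h
  · exact tendsto_of_start_le f hf β hfβ hpos hneg b hb h
  · have key := tendsto_of_start_le (fun x => -f (-x)) ((hf.comp continuous_neg).neg)
      (-β) (by simp [hfβ])
      (fun x hx => by
        have := hneg (-x) (by linarith)
        simpa using this)
      (fun x hx => by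
        have := hpos (-x) (by linarith)
        simpa using this)
      (fun t => -(b t))
      (fun t ht => by simpa using (hb t ht).fun_neg)
      (by simp; linarith)
    have := key.neg
    simpa using this

end PlanarAux

theorem planar_gradient_flow
    (r : ℝ) (hr : 0 < r) (s : ℝ) (hs : s = 1 ∨ s = -1)
    (a b : ℝ → ℝ)
    (hodea : ∀ t ∈ Set.Ici (0 : ℝ),
      HasDerivWithinAt a (s * r * b t - (b t) ^ 2 * a t) (Set.Ici 0) t)
    (hodeb : ∀ t ∈ Set.Ici (0 : ℝ),
      HasDerivWithinAt b (s * r * a t - (a t) ^ 2 * b t) (Set.Ici 0) t) :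
    (∀ t ∈ Set.Ici (0 : ℝ), (a t) ^ 2 - (b t) ^ 2 = (a 0) ^ 2 - (b 0) ^ 2) ∧
    (b 0 < a 0 → 0 ≤ b 0 →
      (Tendsto a atTop
        (𝓝 (Real.sqrt ((((a 0) ^ 2 - (b 0) ^ 2)
          + Real.sqrt (4 * r ^ 2 + ((a 0) ^ 2 - (b 0) ^ 2) ^ 2)) / 2)))) ∧
      (Tendsto b atTop
        (𝓝 (s * Real.sqrt ((-((a 0) ^ 2 - (b 0) ^ 2)
          + Real.sqrt (4 * r ^ 2 + ((a 0) ^ 2 - (b 0) ^ 2) ^ 2)) / 2)))) ∧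
      (Real.sqrt ((((a 0) ^ 2 - (b 0) ^ 2)
          + Real.sqrt (4 * r ^ 2 + ((a 0) ^ 2 - (b 0) ^ 2) ^ 2)) / 2))
        * (s * Real.sqrt ((-((a 0) ^ 2 - (b 0) ^ 2)
          + Real.sqrt (4 * r ^ 2 + ((a 0) ^ 2 - (b 0) ^ 2) ^ 2)) / 2)) = s * r ∧
      (Real.sqrt ((((a 0) ^ 2 - (b 0) ^ 2)
          + Real.sqrt (4 * r ^ 2 + ((a 0) ^ 2 - (b 0) ^ 2) ^ 2)) / 2)) ^ 2
        - (s * Real.sqrt ((-((a 0) ^ 2 - (b 0) ^ 2)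
          + Real.sqrt (4 * r ^ 2 + ((a 0) ^ 2 - (b 0) ^ 2) ^ 2)) / 2)) ^ 2
        = (a 0) ^ 2 - (b 0) ^ 2) := by
  have hE : ∀ t ∈ Set.Ici (0:ℝ),
      HasDerivWithinAt (fun t => a t ^ 2 - b t ^ 2) 0 (Set.Ici 0) t := by
    intro t ht
    have h := ((hodea t ht).fun_pow 2).fun_sub ((hodeb t ht).fun_pow 2)
    refine h.congr_deriv ?_
    push_cast
    ring
  have hconsv : ∀ t ∈ Set.Ici (0:ℝ), a t ^ 2 - b t ^ 2 = a 0 ^ 2 - b 0 ^ 2 := by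
    intro t ht
    have hcontE : ContinuousOn (fun t => a t ^ 2 - b t ^ 2) (Set.Icc 0 t) :=
      fun x hx => ((hE x hx.1).continuousWithinAt).mono Set.Icc_subset_Ici_self
    exact constant_of_has_deriv_right_zero hcontE
      (fun x hx => (hE x hx.1).mono (Set.Ici_subset_Ici.2 hx.1)) t (Set.right_mem_Icc.2 ht)
  refine ⟨hconsv, ?_⟩
  intro hba hb0
  set c := a 0 ^ 2 - b 0 ^ 2 with hc
  have hcpos : 0 < c := by nlinarith
  have ha0 : 0 < a 0 := lt_of_le_of_lt hb0 hba
  have hasq : ∀ t ∈ Set.Ici (0:ℝ), a t ^ 2 = b t ^ 2 + c := fun t ht => by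
    have := hconsv t ht; linarith
  have hapos : ∀ t ∈ Set.Ici (0:ℝ), 0 < a t := by
    intro t ht
    by_contra h
    push_neg at h
    have hane : ∀ x ∈ Set.Icc (0:ℝ) t, a x ≠ 0 := fun x hx hx0 => by
      nlinarith [hasq x hx.1, sq_nonneg (b x)]
    have hat : a t < 0 := lt_of_le_of_ne h (hane t (Set.right_mem_Icc.2 ht))
    have hconta : ContinuousOn a (Set.Icc 0 t) := fun x hx =>
      ((hodea x hx.1).continuousWithinAt).mono Set.Icc_subset_Ici_self
    have h0m : (0:ℝ) ∈ Set.Icc (a t) (a 0) := ⟨hat.le, ha0.le⟩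
    obtain ⟨x, hx, hax⟩ := intermediate_value_Icc' ht hconta h0m
    exact hane x hx hax
  have haeq : ∀ t ∈ Set.Ici (0:ℝ), a t = Real.sqrt (b t ^ 2 + c) := fun t ht => by
    rw [← hasq t ht, Real.sqrt_sq (hapos t ht).le]
  set D := Real.sqrt (4 * r ^ 2 + c ^ 2) with hD
  have hD2 : D ^ 2 = 4 * r ^ 2 + c ^ 2 := Real.sq_sqrt (by positivity)
  have hDnn : 0 ≤ D := Real.sqrt_nonneg _
  have hcD : c < D := by nlinarith
  have hcD' : -c < D := by nlinarith
  set β := s * Real.sqrt ((-c + D) / 2) with hβ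
  set α := Real.sqrt ((c + D) / 2) with hα
  have hs2 : s ^ 2 = 1 := by rcases hs with h | h <;> rw [h] <;> norm_num
  have hβ2 : β ^ 2 = (-c + D) / 2 := by
    rw [hβ, mul_pow, hs2, one_mul, Real.sq_sqrt (by linarith)]
  have hα2 : α ^ 2 = (c + D) / 2 := Real.sq_sqrt (by linarith)
  have hβc : β ^ 2 + c = (c + D) / 2 := by rw [hβ2]; ring
  have hprod : ((c + D) / 2) * ((-c + D) / 2) = r ^ 2 := by linear_combination hD2 / 4
  have hαβ : α * β = s * r := by
    rw [hβ, hα, ← mul_assoc, mul_comm (Real.sqrt ((c + D)/2)) s, mul_assoc,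
      ← Real.sqrt_mul (by linarith) , hprod, Real.sqrt_sq hr.le]
  have hgmono : StrictMono (fun x : ℝ => x * Real.sqrt (x ^ 2 + c)) := by
    apply strictMono_of_hasDerivAt_pos
      (f' := fun x => 1 * Real.sqrt (x ^ 2 + c) + x * (2 * x / (2 * Real.sqrt (x ^ 2 + c))))
    · intro x
      have hx : x ^ 2 + c ≠ 0 := by positivity
      have hsq : HasDerivAt (fun x : ℝ => x ^ 2 + c) (2 * x) x := by
        simpa using (hasDerivAt_pow 2 x).add_const c
      exact (hasDerivAt_id' x).mul (hsq.sqrt hx)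
    · intro x
      have h1 : 0 < Real.sqrt (x ^ 2 + c) := Real.sqrt_pos.2 (by positivity)
      have h2 : x * (2 * x / (2 * Real.sqrt (x ^ 2 + c))) = x ^ 2 / Real.sqrt (x ^ 2 + c) := by
        field_simp
      rw [one_mul, h2]
      have h3 : 0 ≤ x ^ 2 / Real.sqrt (x ^ 2 + c) := div_nonneg (sq_nonneg x) h1.le
      linarith
  have hgβ : β * Real.sqrt (β ^ 2 + c) = s * r := by
    rw [hβc, ← hα, mul_comm, hαβ]
  have hsqmul : ∀ x : ℝ, Real.sqrt (x ^ 2 + c) * Real.sqrt (x ^ 2 + c) = x ^ 2 + c :=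
    fun x => Real.mul_self_sqrt (by positivity)
  have hfactor : ∀ x : ℝ, s * r * Real.sqrt (x ^ 2 + c) - (x ^ 2 + c) * x
      = Real.sqrt (x ^ 2 + c) * (s * r - x * Real.sqrt (x ^ 2 + c)) := by
    intro x
    linear_combination x * hsqmul x
  have hbtend : Tendsto b atTop (𝓝 β) := by
    have hsc : Continuous (fun x : ℝ => Real.sqrt (x ^ 2 + c)) :=
      Real.continuous_sqrt.comp ((continuous_pow 2).add continuous_const)
    apply tendsto_scalar_ode (fun x => s * r * Real.sqrt (x ^ 2 + c) - (x ^ 2 + c) * x)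
    · exact (continuous_const.mul hsc).sub
        (((continuous_pow 2).add continuous_const).mul continuous_id')
    · simp only [hfactor, hgβ, sub_self, mul_zero]
    · intro x hx
      simp only [hfactor]
      refine mul_pos (Real.sqrt_pos.2 (by positivity)) (sub_pos.2 ?_)
      have := hgmono hx
      simp only at this
      rw [hgβ] at this
      exact this
    · intro x hx
      simp only [hfactor]
      have h1 : 0 < Real.sqrt (x ^ 2 + c) := Real.sqrt_pos.2 (by positivity)
      refine mul_neg_of_pos_of_neg h1 (sub_neg.2 ?_)
      have := hgmono hx
      simp only at this
      rw [hgβ] at this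
      exact this
    · intro t ht
      have h1 := haeq t ht
      have h2 := hasq t ht
      convert hodeb t ht using 1
      rw [← h1, ← h2]
  have hacont : Continuous (fun x : ℝ => Real.sqrt (x ^ 2 + c)) :=
    Real.continuous_sqrt.comp ((continuous_pow 2).add continuous_const)
  have hatend : Tendsto a atTop (𝓝 α) := by
    have h1 : Tendsto (fun t => Real.sqrt (b t ^ 2 + c)) atTop (𝓝 (Real.sqrt (β ^ 2 + c))) :=
      (hacont.tendsto β).comp hbtend
    have h2 : Real.sqrt (β ^ 2 + c) = α := by rw [hβc, hα]
    rw [h2] at h1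
    refine Tendsto.congr' ?_ h1
    filter_upwards [eventually_ge_atTop (0:ℝ)] with t ht
    exact (haeq t ht).symm
  refine ⟨hatend, hbtend, hαβ, ?_⟩
  rw [hα2, hβ2]
  ring
end

section
/- Fix r > 0, κ > 0, τ ∈ (0,1), T ∈ ℕ₊ and δ ∈ (0,1). Let s₁, …, s_T be i.i.d. uniform on {±1}, and define the sequences a₀ = κ, b₀ = 0, a_{i+1} = (1−τ) a_i + τ f(a_i, b_i), b_{i+1} = (1−τ) b_i + τ s_{i+1} g(a_i, b_i), where f(a,b) = √(((a²−b²) + √(4r² + (a²−b²)²))/2) and g(a,b) = √((−(a²−b²) + √(4r² + (a²−b²)²))/2). Then with probability at least 1 − δ, |b_i| ≤ √(2 r τ log(2T/δ)) simultaneously for all i ∈ {1, …, T}. -/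
/-!
STATEMENT 12: High-probability bound on |b_i| along the Reptile recursion
with i.i.d. uniform random signs.
Here `s i` denotes the sign `s_{i+1}` used in the update from step `i` to `i+1`.
-/

/-- `f(a,b) = √(((a²−b²) + √(4r² + (a²−b²)²))/2)`. -/
noncomputable def fRep (r a b : ℝ) : ℝ :=
  Real.sqrt (((a ^ 2 - b ^ 2) + Real.sqrt (4 * r ^ 2 + (a ^ 2 - b ^ 2) ^ 2)) / 2)

/-- `g(a,b) = √((−(a²−b²) + √(4r² + (a²−b²)²))/2)`. -/
noncomputable def gRep (r a b : ℝ) : ℝ :=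
  Real.sqrt ((-(a ^ 2 - b ^ 2) + Real.sqrt (4 * r ^ 2 + (a ^ 2 - b ^ 2) ^ 2)) / 2)

/-- The Reptile recursion `a₀ = κ`, `b₀ = 0`,
`a_{i+1} = (1−τ) a_i + τ f(a_i, b_i)`, `b_{i+1} = (1−τ) b_i + τ s_{i+1} g(a_i, b_i)`,
where `s i` is the sign `s_{i+1}`. -/
noncomputable def reptileSeq (r κ τ : ℝ) (s : ℕ → ℝ) : ℕ → ℝ × ℝ
  | 0 => (κ, 0)
  | i + 1 =>
      let p := reptileSeq r κ τ s i
      ((1 - τ) * p.1 + τ * fRep r p.1 p.2,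
       (1 - τ) * p.2 + τ * s i * gRep r p.1 p.2)


open MeasureTheory
open scoped ENNReal

/-- Signs `s₁, …, s_T ∈ {±1}` encoded by booleans: `signOf σ i` is the sign
`s_{i+1}` (the one used in the update from step `i` to step `i+1`). -/
noncomputable def signOf {T : ℕ} (σ : Fin T → Bool) : ℕ → ℝ := fun i =>
  if h : i < T then (if σ ⟨i, h⟩ then 1 else -1) else 1

/-- Uniform distribution over the `2^T` sign patterns. -/
noncomputable def uniformSigns (T : ℕ) : Measure (Fin T → Bool) :=
  (PMF.uniformOfFintype (Fin T → Bool)).toMeasure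

lemma signOf_pm {T : ℕ} (σ : Fin T → Bool) (i : ℕ) :
    signOf σ i = 1 ∨ signOf σ i = -1 := by
  unfold signOf
  split
  · split
    · left; rfl
    · right; rfl
  · left; rfl

lemma reptileSeq_congr (r κ τ : ℝ) (s s' : ℕ → ℝ) (i : ℕ)
    (h : ∀ j < i, s j = s' j) : reptileSeq r κ τ s i = reptileSeq r κ τ s' i := by
  induction i with
  | zero => rfl
  | succ i ih =>
    have h1 : reptileSeq r κ τ s i = reptileSeq r κ τ s' i :=
      ih fun j hj => h j (Nat.lt_succ_of_lt hj)
    show (_, _) = (_, _)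
    rw [h1, h i (Nat.lt_succ_self i)]

/-- Flip the `j`-th coordinate. -/
def flipAt {T : ℕ} (j : Fin T) : Equiv.Perm (Fin T → Bool) :=
  Function.Involutive.toPerm (fun σ => Function.update σ j (!σ j)) (by
    intro σ; funext k
    by_cases hk : k = j
    · subst hk; simp
    · simp [Function.update, hk])

lemma signOf_flipAt_ne {T : ℕ} (j : Fin T) (σ : Fin T → Bool) (i : ℕ) (hij : i ≠ (j : ℕ)) :
    signOf (flipAt j σ) i = signOf σ i := by
  unfold signOf
  split
  · rename_i h
    have : (⟨i, h⟩ : Fin T) ≠ j := by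
      intro hc; exact hij (by rw [← hc])
    simp [flipAt, Function.Involutive.toPerm, Function.update, this]
  · rfl

lemma signOf_flipAt_self {T : ℕ} (j : Fin T) (σ : Fin T → Bool) :
    signOf (flipAt j σ) (j : ℕ) = -signOf σ (j : ℕ) := by
  unfold signOf
  have hj : (j : ℕ) < T := j.isLt
  rw [dif_pos hj, dif_pos hj]
  have hjj : (⟨(j : ℕ), hj⟩ : Fin T) = j := by ext; rfl
  rw [hjj]
  have : flipAt j σ j = !σ j := by simp [flipAt, Function.Involutive.toPerm]
  rw [this]
  cases σ j <;> simp

lemma reptileSeq_flipAt {T : ℕ} (r κ τ : ℝ) (j : Fin T) (σ : Fin T → Bool) (i : ℕ)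
    (hi : i ≤ (j : ℕ)) :
    reptileSeq r κ τ (signOf (flipAt j σ)) i = reptileSeq r κ τ (signOf σ) i :=
  reptileSeq_congr _ _ _ _ _ _ fun k hk =>
    signOf_flipAt_ne j σ k (by omega)

lemma sqrt_aux (r x : ℝ) (hx : 0 ≤ x) :
    x ≤ Real.sqrt (4 * r ^ 2 + x ^ 2) := by
  calc x = Real.sqrt (x ^ 2) := by rw [Real.sqrt_sq hx]
  _ ≤ _ := Real.sqrt_le_sqrt (by nlinarith)

lemma fg_sq (r a b : ℝ) (h : b ^ 2 ≤ a ^ 2) :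
    (fRep r a b) ^ 2 = ((a ^ 2 - b ^ 2) + Real.sqrt (4 * r ^ 2 + (a ^ 2 - b ^ 2) ^ 2)) / 2 ∧
    (gRep r a b) ^ 2 = (-(a ^ 2 - b ^ 2) + Real.sqrt (4 * r ^ 2 + (a ^ 2 - b ^ 2) ^ 2)) / 2 := by
  have hx : 0 ≤ a ^ 2 - b ^ 2 := by linarith
  have hS := sqrt_aux r _ hx
  constructor <;> [rw [fRep]; rw [gRep]] <;> rw [Real.sq_sqrt (by linarith)]

lemma gRep_sq_le (r a b : ℝ) (hr : 0 ≤ r) (h : b ^ 2 ≤ a ^ 2) :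
    (gRep r a b) ^ 2 ≤ r := by
  have hx : 0 ≤ a ^ 2 - b ^ 2 := by linarith
  have h2 := (fg_sq r a b h).2
  have hS : Real.sqrt (4 * r ^ 2 + (a ^ 2 - b ^ 2) ^ 2) ≤ 2 * r + (a ^ 2 - b ^ 2) := by
    rw [show (4 : ℝ) * r ^ 2 + (a ^ 2 - b ^ 2) ^ 2 =
      (2 * r + (a ^ 2 - b ^ 2)) ^ 2 - 4 * r * (a ^ 2 - b ^ 2) by ring]
    calc Real.sqrt ((2 * r + (a ^ 2 - b ^ 2)) ^ 2 - 4 * r * (a ^ 2 - b ^ 2))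
        ≤ Real.sqrt ((2 * r + (a ^ 2 - b ^ 2)) ^ 2) := Real.sqrt_le_sqrt (by nlinarith)
      _ = 2 * r + (a ^ 2 - b ^ 2) := Real.sqrt_sq (by nlinarith)
  rw [h2]; linarith

lemma reptile_invariant (r κ τ : ℝ) (hκ : 0 ≤ κ) (hτ0 : 0 ≤ τ) (hτ1 : τ ≤ 1)
    (s : ℕ → ℝ) (hs : ∀ i, s i = 1 ∨ s i = -1) (i : ℕ) :
    0 ≤ (reptileSeq r κ τ s i).1 ∧
      (reptileSeq r κ τ s i).2 ^ 2 ≤ (reptileSeq r κ τ s i).1 ^ 2 := by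
  induction i with
  | zero => simpa [reptileSeq] using ⟨hκ, by nlinarith⟩
  | succ i ih =>
    obtain ⟨ha, hb⟩ := ih
    set a := (reptileSeq r κ τ s i).1 with hadef
    set b := (reptileSeq r κ τ s i).2 with hbdef
    obtain ⟨hf2, hg2⟩ := fg_sq r a b hb
    have hf0 : 0 ≤ fRep r a b := Real.sqrt_nonneg _
    have hg0 : 0 ≤ gRep r a b := Real.sqrt_nonneg _
    have hx : 0 ≤ a ^ 2 - b ^ 2 := by linarith
    have hfg : gRep r a b ≤ fRep r a b := by
      rw [fRep, gRep]; exact Real.sqrt_le_sqrt (by linarith)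
    have hab : |b| ≤ a := by
      have := Real.sqrt_le_sqrt hb
      rwa [Real.sqrt_sq_eq_abs, Real.sqrt_sq ha] at this
    have habs : -a ≤ b ∧ b ≤ a := abs_le.mp hab
    have hcross : s i * b * gRep r a b ≤ a * fRep r a b := by
      rcases hs i with h | h <;> rw [h] <;> nlinarith [habs.1, habs.2]
    have hs2 : (s i) ^ 2 = 1 := by rcases hs i with h | h <;> rw [h] <;> ring
    have hstep : reptileSeq r κ τ s (i + 1) =
        ((1 - τ) * a + τ * fRep r a b, (1 - τ) * b + τ * s i * gRep r a b) := rfl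
    rw [hstep]
    constructor
    · dsimp only; nlinarith
    · dsimp only
      have hfg2 : fRep r a b ^ 2 - gRep r a b ^ 2 = a ^ 2 - b ^ 2 := by
        rw [hf2, hg2]; ring
      have key : ((1 - τ) * a + τ * fRep r a b) ^ 2 -
          ((1 - τ) * b + τ * s i * gRep r a b) ^ 2 =
          (1 - τ) ^ 2 * (a ^ 2 - b ^ 2) +
            2 * τ * (1 - τ) * (a * fRep r a b - s i * b * gRep r a b) +
            τ ^ 2 * (fRep r a b ^ 2 - s i ^ 2 * gRep r a b ^ 2) := by ring
      have h1 : 0 ≤ (1 - τ) ^ 2 * (a ^ 2 - b ^ 2) := by positivity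
      have h2 : 0 ≤ 2 * τ * (1 - τ) * (a * fRep r a b - s i * b * gRep r a b) := by
        have : (0:ℝ) ≤ 1 - τ := by linarith
        have := mul_nonneg (mul_nonneg (by linarith : (0:ℝ) ≤ 2 * τ) this)
          (sub_nonneg.mpr hcross)
        linarith
      have h3 : 0 ≤ τ ^ 2 * (fRep r a b ^ 2 - s i ^ 2 * gRep r a b ^ 2) := by
        rw [hs2, one_mul, hfg2]; positivity
      nlinarith [key]

/-- Key MGF bound. -/
lemma mgf_bound (r κ τ : ℝ) (hr : 0 < r) (hκ : 0 ≤ κ) (hτ0 : 0 < τ) (hτ1 : τ < 1)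
    (T : ℕ) : ∀ i ≤ T, ∀ l : ℝ,
    ∑ σ : Fin T → Bool, Real.exp (l * (reptileSeq r κ τ (signOf σ) i).2) ≤
      2 ^ T * Real.exp (l ^ 2 * (τ * r) / 2) := by
  intro i
  induction i with
  | zero =>
    intro _ l
    have hsum : ∑ σ : Fin T → Bool, Real.exp (l * (reptileSeq r κ τ (signOf σ) 0).2)
        = 2 ^ T := by
      have : ∀ σ : Fin T → Bool, Real.exp (l * (reptileSeq r κ τ (signOf σ) 0).2) = 1 := by
        intro σ; simp [reptileSeq]
      rw [Finset.sum_congr rfl (fun σ _ => this σ), Finset.sum_const, nsmul_eq_mul, mul_one]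
      simp [Finset.card_univ]
    rw [hsum]
    have h1 : (1:ℝ) ≤ Real.exp (l ^ 2 * (τ * r) / 2) := by
      rw [← Real.exp_zero]; exact Real.exp_le_exp.mpr (by positivity)
    exact le_mul_of_one_le_right (by positivity) h1
  | succ i ih =>
    intro hi l
    have hiT : i < T := hi
    have hiT' : i ≤ T := Nat.le_of_lt hiT
    set j : Fin T := ⟨i, hiT⟩ with hj
    set bf : (Fin T → Bool) → ℝ := fun σ => (reptileSeq r κ τ (signOf σ) i).2 with hbf
    set af : (Fin T → Bool) → ℝ := fun σ => (reptileSeq r κ τ (signOf σ) i).1 with haf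
    set A : (Fin T → Bool) → ℝ := fun σ => Real.exp (l * (1 - τ) * bf σ) with hA
    set c : (Fin T → Bool) → ℝ := fun σ => l * τ * gRep r (af σ) (bf σ) with hc
    have hpt : ∀ σ : Fin T → Bool,
        Real.exp (l * (reptileSeq r κ τ (signOf σ) (i + 1)).2) =
          A σ * Real.cosh (c σ) + (A σ * Real.sinh (c σ)) * signOf σ i := by
      intro σ
      have hb1 : (reptileSeq r κ τ (signOf σ) (i + 1)).2 =
          (1 - τ) * bf σ + τ * signOf σ i * gRep r (af σ) (bf σ) := rfl
      rw [hb1]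
      have : l * ((1 - τ) * bf σ + τ * signOf σ i * gRep r (af σ) (bf σ)) =
          l * (1 - τ) * bf σ + c σ * signOf σ i := by rw [hc]; ring
      rw [this, Real.exp_add, hA]
      rcases signOf_pm σ i with h | h <;> rw [h]
      · rw [mul_one, mul_one]
        have h1 : Real.exp (c σ) = Real.cosh (c σ) + Real.sinh (c σ) :=
          (Real.cosh_add_sinh _).symm
        rw [h1]; ring
      · rw [mul_neg_one, Real.exp_neg, mul_neg_one]
        have h1 : (Real.exp (c σ))⁻¹ = Real.cosh (c σ) - Real.sinh (c σ) := by
          rw [← Real.exp_neg]; exact (Real.cosh_sub_sinh _).symm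
        rw [h1]; ring
    have hzero : ∑ σ : Fin T → Bool, (A σ * Real.sinh (c σ)) * signOf σ i = 0 := by
      set G : (Fin T → Bool) → ℝ := fun σ => (A σ * Real.sinh (c σ)) * signOf σ i with hG
      have hflip : ∀ σ, G (flipAt j σ) = -G σ := by
        intro σ
        have hrep : reptileSeq r κ τ (signOf (flipAt j σ)) i =
            reptileSeq r κ τ (signOf σ) i := reptileSeq_flipAt r κ τ j σ i (le_refl i)
        have hsign : signOf (flipAt j σ) i = -signOf σ i := signOf_flipAt_self j σ
        simp only [hG, hA, hc, hbf, haf, hrep, hsign]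
        ring
      have h1 : ∑ σ : Fin T → Bool, G (flipAt j σ) = ∑ σ : Fin T → Bool, G σ :=
        Equiv.sum_comp (flipAt j) G
      have h2 : ∑ σ : Fin T → Bool, G (flipAt j σ) = -∑ σ : Fin T → Bool, G σ := by
        rw [Finset.sum_congr rfl (fun σ _ => hflip σ), Finset.sum_neg_distrib]
      linarith [h1, h2]
    have hterm : ∀ σ : Fin T → Bool,
        A σ * Real.cosh (c σ) ≤ A σ * Real.exp (l ^ 2 * (τ ^ 2 * r) / 2) := by
      intro σ
      have hA0 : 0 ≤ A σ := Real.exp_nonneg _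
      have hinv := reptile_invariant r κ τ hκ hτ0.le hτ1.le (signOf σ)
        (fun k => signOf_pm σ k) i
      have hg := gRep_sq_le r (af σ) (bf σ) hr.le hinv.2
      have hcsq : c σ ^ 2 / 2 ≤ l ^ 2 * (τ ^ 2 * r) / 2 := by
        have : c σ ^ 2 = l ^ 2 * τ ^ 2 * (gRep r (af σ) (bf σ)) ^ 2 := by rw [hc]; ring
        rw [this]; nlinarith [sq_nonneg (l * τ)]
      exact mul_le_mul_of_nonneg_left
        ((Real.cosh_le_exp_half_sq _).trans (Real.exp_le_exp.mpr hcsq)) hA0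
    calc ∑ σ : Fin T → Bool, Real.exp (l * (reptileSeq r κ τ (signOf σ) (i + 1)).2)
        = ∑ σ : Fin T → Bool, (A σ * Real.cosh (c σ) + (A σ * Real.sinh (c σ)) * signOf σ i) :=
          Finset.sum_congr rfl (fun σ _ => hpt σ)
      _ = ∑ σ : Fin T → Bool, A σ * Real.cosh (c σ) := by
          rw [Finset.sum_add_distrib, hzero, add_zero]
      _ ≤ ∑ σ : Fin T → Bool, A σ * Real.exp (l ^ 2 * (τ ^ 2 * r) / 2) :=
          Finset.sum_le_sum (fun σ _ => hterm σ)
      _ = Real.exp (l ^ 2 * (τ ^ 2 * r) / 2) * ∑ σ : Fin T → Bool, A σ := by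
          rw [Finset.mul_sum]; exact Finset.sum_congr rfl (fun σ _ => mul_comm _ _)
      _ ≤ Real.exp (l ^ 2 * (τ ^ 2 * r) / 2) *
            (2 ^ T * Real.exp ((l * (1 - τ)) ^ 2 * (τ * r) / 2)) := by
          apply mul_le_mul_of_nonneg_left _ (Real.exp_nonneg _)
          have := ih hiT' (l * (1 - τ))
          simpa [hA, mul_assoc] using this
      _ ≤ 2 ^ T * Real.exp (l ^ 2 * (τ * r) / 2) := by
          rw [show Real.exp (l ^ 2 * (τ ^ 2 * r) / 2) *
              (2 ^ T * Real.exp ((l * (1 - τ)) ^ 2 * (τ * r) / 2)) =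
              2 ^ T * (Real.exp (l ^ 2 * (τ ^ 2 * r) / 2) *
                Real.exp ((l * (1 - τ)) ^ 2 * (τ * r) / 2)) by ring, ← Real.exp_add]
          apply mul_le_mul_of_nonneg_left _ (by positivity : (0:ℝ) ≤ 2 ^ T)
          apply Real.exp_le_exp.mpr
          nlinarith [sq_nonneg l, sq_nonneg (l * τ), mul_nonneg (sq_nonneg (l * τ)) hr.le,
            mul_nonneg (mul_nonneg (mul_nonneg (sq_nonneg l) hτ0.le) hr.le) (mul_nonneg hτ0.le (by linarith : (0:ℝ) ≤ 1 - τ))]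

/-- Generic Chernoff counting bound. -/
lemma chernoff_count (r κ τ : ℝ) (hr : 0 < r) (hκ : 0 ≤ κ) (hτ0 : 0 < τ) (hτ1 : τ < 1)
    (T : ℕ) (i : ℕ) (hi : i ≤ T) (t l : ℝ)
    (S : Finset (Fin T → Bool))
    (hS : ∀ σ ∈ S, Real.exp (l * t) ≤ Real.exp (l * (reptileSeq r κ τ (signOf σ) i).2)) :
    (S.card : ℝ) * Real.exp (l * t) ≤ 2 ^ T * Real.exp (l ^ 2 * (τ * r) / 2) := by
  calc (S.card : ℝ) * Real.exp (l * t)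
      = ∑ _σ ∈ S, Real.exp (l * t) := by rw [Finset.sum_const, nsmul_eq_mul]
    _ ≤ ∑ σ ∈ S, Real.exp (l * (reptileSeq r κ τ (signOf σ) i).2) :=
        Finset.sum_le_sum hS
    _ ≤ ∑ σ : Fin T → Bool, Real.exp (l * (reptileSeq r κ τ (signOf σ) i).2) :=
        Finset.sum_le_sum_of_subset_of_nonneg (Finset.subset_univ S)
          (fun σ _ _ => Real.exp_nonneg _)
    _ ≤ 2 ^ T * Real.exp (l ^ 2 * (τ * r) / 2) := mgf_bound r κ τ hr hκ hτ0 hτ1 T i hi l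

/-- Per-step two-sided tail count. -/
lemma tail_count (r κ τ : ℝ) (hr : 0 < r) (hκ : 0 ≤ κ) (hτ0 : 0 < τ) (hτ1 : τ < 1)
    (T : ℕ) (i : ℕ) (hi : i ≤ T) (t : ℝ) (ht : 0 < t) :
    ((Finset.univ.filter
        (fun σ : Fin T → Bool => t < |(reptileSeq r κ τ (signOf σ) i).2|)).card : ℝ) ≤
      2 * 2 ^ T * Real.exp (-(t ^ 2) / (2 * (τ * r))) := by
  set b : (Fin T → Bool) → ℝ := fun σ => (reptileSeq r κ τ (signOf σ) i).2 with hb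
  have hτr : 0 < τ * r := mul_pos hτ0 hr
  set l : ℝ := t / (τ * r) with hl
  have hl0 : 0 < l := div_pos ht hτr
  have hexp : l ^ 2 * (τ * r) / 2 - l * t = -(t ^ 2) / (2 * (τ * r)) := by
    field_simp [hl]
    have e : l * (τ * r) = t := by rw [hl]; exact div_mul_cancel₀ t hτr.ne'
    linear_combination (l * τ * r - t) * e
  have hup : ((Finset.univ.filter (fun σ => t < b σ)).card : ℝ) ≤
      2 ^ T * Real.exp (-(t ^ 2) / (2 * (τ * r))) := by
    have h1 := chernoff_count r κ τ hr hκ hτ0 hτ1 T i hi t l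
      (Finset.univ.filter (fun σ => t < b σ))
      (fun σ hσ => by
        have := (Finset.mem_filter.mp hσ).2
        exact Real.exp_le_exp.mpr (by nlinarith))
    rw [← hexp, Real.exp_sub, ← mul_div_assoc, le_div_iff₀ (Real.exp_pos _)]
    linarith [h1]
  have hdown : ((Finset.univ.filter (fun σ => b σ < -t)).card : ℝ) ≤
      2 ^ T * Real.exp (-(t ^ 2) / (2 * (τ * r))) := by
    have hexp' : (-l) ^ 2 * (τ * r) / 2 - (-l) * (-t) = -(t ^ 2) / (2 * (τ * r)) := by
      field_simp [hl]
      have e : l * (τ * r) = t := by rw [hl]; exact div_mul_cancel₀ t hτr.ne'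
      linear_combination (l * τ * r - t) * e
    have h1 := chernoff_count r κ τ hr hκ hτ0 hτ1 T i hi (-t) (-l)
      (Finset.univ.filter (fun σ => b σ < -t))
      (fun σ hσ => by
        have := (Finset.mem_filter.mp hσ).2
        exact Real.exp_le_exp.mpr (by nlinarith))
    rw [← hexp', Real.exp_sub, ← mul_div_assoc, le_div_iff₀ (Real.exp_pos _)]
    linarith [h1]
  have hsub : (Finset.univ.filter (fun σ : Fin T → Bool => t < |b σ|)) ⊆
      (Finset.univ.filter (fun σ => t < b σ)) ∪ (Finset.univ.filter (fun σ => b σ < -t)) := by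
    intro σ hσ
    have h2 := (Finset.mem_filter.mp hσ).2
    rcases lt_abs.mp h2 with h | h
    · exact Finset.mem_union_left _ (Finset.mem_filter.mpr ⟨Finset.mem_univ _, h⟩)
    · exact Finset.mem_union_right _ (Finset.mem_filter.mpr ⟨Finset.mem_univ _, by linarith⟩)
  calc ((Finset.univ.filter (fun σ : Fin T → Bool => t < |b σ|)).card : ℝ)
      ≤ (((Finset.univ.filter (fun σ => t < b σ)) ∪
          (Finset.univ.filter (fun σ => b σ < -t))).card : ℝ) := by
        exact_mod_cast Nat.cast_le.mpr (Finset.card_le_card hsub)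
    _ ≤ ((Finset.univ.filter (fun σ => t < b σ)).card : ℝ) +
        ((Finset.univ.filter (fun σ => b σ < -t)).card : ℝ) := by
        exact_mod_cast Nat.cast_le.mpr (Finset.card_union_le _ _)
    _ ≤ 2 * 2 ^ T * Real.exp (-(t ^ 2) / (2 * (τ * r))) := by linarith

theorem reptile_b_highprob_bound
    (r : ℝ) (hr : 0 < r) (κ : ℝ) (hκ : 0 < κ) (τ : ℝ) (hτ : τ ∈ Set.Ioo (0 : ℝ) 1)
    (T : ℕ) (hT : 1 ≤ T) (δ : ℝ) (hδ : δ ∈ Set.Ioo (0 : ℝ) 1) :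
    ENNReal.ofReal (1 - δ) ≤
      uniformSigns T
        {σ : Fin T → Bool | ∀ i ∈ Finset.Icc 1 T,
          |(reptileSeq r κ τ (signOf σ) i).2| ≤
            Real.sqrt (2 * r * τ * Real.log (2 * (T : ℝ) / δ))} := by
  classical
  obtain ⟨hτ0, hτ1⟩ := hτ
  obtain ⟨hδ0, hδ1⟩ := hδ
  have hT0 : (0:ℝ) < T := by exact_mod_cast hT
  set L : ℝ := Real.log (2 * (T : ℝ) / δ) with hLdef
  have hratio : (1:ℝ) < 2 * (T : ℝ) / δ := by
    have hT1 : (1:ℝ) ≤ T := by exact_mod_cast hT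
    rw [lt_div_iff₀ hδ0]; nlinarith
  have hL : 0 < L := Real.log_pos hratio
  set t : ℝ := Real.sqrt (2 * r * τ * L) with htdef
  have htarg : 0 < 2 * r * τ * L := by positivity
  have ht : 0 < t := Real.sqrt_pos.mpr htarg
  have ht2 : t ^ 2 = 2 * r * τ * L := Real.sq_sqrt htarg.le
  have hτr : 0 < τ * r := mul_pos hτ0 hr
  have hexpL : Real.exp (-(t ^ 2) / (2 * (τ * r))) = δ / (2 * (T : ℝ)) := by
    have h1 : -(t ^ 2) / (2 * (τ * r)) = -L := by
      rw [ht2]; field_simp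
    rw [h1, Real.exp_neg, Real.exp_log (by positivity)]
    rw [inv_div]
  set b : (Fin T → Bool) → ℕ → ℝ := fun σ i => (reptileSeq r κ τ (signOf σ) i).2 with hbdef
  set P : (Fin T → Bool) → Prop := fun σ => ∀ i ∈ Finset.Icc 1 T, |b σ i| ≤ t with hP
  set goodF : Finset (Fin T → Bool) := Finset.univ.filter P with hgood
  set badF : Finset (Fin T → Bool) := Finset.univ.filter (fun σ => ¬ P σ) with hbad
  -- bad count
  have hbadsub : badF ⊆ (Finset.Icc 1 T).biUnion
      (fun i => Finset.univ.filter (fun σ => t < |b σ i|)) := by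
    intro σ hσ
    have h2 : ¬ ∀ i ∈ Finset.Icc 1 T, |b σ i| ≤ t := (Finset.mem_filter.mp hσ).2
    push_neg at h2
    obtain ⟨i, hi1, hi2⟩ := h2
    exact Finset.mem_biUnion.mpr ⟨i, hi1, Finset.mem_filter.mpr ⟨Finset.mem_univ _, hi2⟩⟩
  have hbadcard : (badF.card : ℝ) ≤ δ * 2 ^ T := by
    have h1 : (badF.card : ℝ) ≤
        ∑ i ∈ Finset.Icc 1 T,
          ((Finset.univ.filter (fun σ => t < |b σ i|)).card : ℝ) := by
      have := (Finset.card_le_card hbadsub).trans (Finset.card_biUnion_le)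
      exact_mod_cast this
    have h2 : ∀ i ∈ Finset.Icc 1 T,
        ((Finset.univ.filter (fun σ => t < |b σ i|)).card : ℝ) ≤
          2 * 2 ^ T * (δ / (2 * (T : ℝ))) := by
      intro i hi
      have hiT : i ≤ T := (Finset.mem_Icc.mp hi).2
      have := tail_count r κ τ hr hκ.le hτ0 hτ1 T i hiT t ht
      rw [hexpL] at this
      exact this
    calc (badF.card : ℝ) ≤ ∑ i ∈ Finset.Icc 1 T,
          ((Finset.univ.filter (fun σ => t < |b σ i|)).card : ℝ) := h1
      _ ≤ ∑ _i ∈ Finset.Icc 1 T, 2 * 2 ^ T * (δ / (2 * (T : ℝ))) :=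
          Finset.sum_le_sum h2
      _ = (T : ℝ) * (2 * 2 ^ T * (δ / (2 * (T : ℝ)))) := by
          rw [Finset.sum_const, Nat.card_Icc, nsmul_eq_mul]
          norm_num
      _ = δ * 2 ^ T := by field_simp
  have hcardsplit : goodF.card + badF.card = 2 ^ T := by
    rw [hgood, hbad, Finset.card_filter_add_card_filter_not]
    simp [Finset.card_univ]
  have hgoodcard : (1 - δ) * 2 ^ T ≤ (goodF.card : ℝ) := by
    have : (goodF.card : ℝ) + (badF.card : ℝ) = 2 ^ T := by
      exact_mod_cast hcardsplit
    nlinarith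
  -- measure computation
  set G : Set (Fin T → Bool) := {σ | P σ} with hG
  have hms : MeasurableSet G := (Set.toFinite G).measurableSet
  have hmeas : uniformSigns T G = (goodF.card : ℝ≥0∞) * ((2:ℝ≥0∞) ^ T)⁻¹ := by
    rw [uniformSigns, PMF.toMeasure_apply _ hms, tsum_fintype]
    have hcardT : ((Fintype.card (Fin T → Bool) : ℝ≥0∞)) = (2:ℝ≥0∞) ^ T := by
      simp
    have h1 : ∀ σ : Fin T → Bool,
        G.indicator (⇑(PMF.uniformOfFintype (Fin T → Bool))) σ =
          if σ ∈ G then ((2:ℝ≥0∞) ^ T)⁻¹ else 0 := by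
      intro σ
      by_cases hσG : σ ∈ G
      · rw [Set.indicator_of_mem hσG, if_pos hσG, PMF.uniformOfFintype_apply, hcardT]
      · rw [Set.indicator_of_notMem hσG, if_neg hσG]
    rw [Finset.sum_congr rfl (fun σ _ => h1 σ), ← Finset.sum_filter]
    have hfe : Finset.univ.filter (fun σ => σ ∈ G) = goodF := by
      ext σ
      simp only [Finset.mem_filter, Finset.mem_univ, true_and, hG, Set.mem_setOf_eq, hgood]
    rw [hfe, Finset.sum_const, nsmul_eq_mul]
  show ENNReal.ofReal (1 - δ) ≤ uniformSigns T G
  rw [hmeas, ← div_eq_mul_inv]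
  have h2ne : ((2:ℝ≥0∞) ^ T) ≠ 0 := pow_ne_zero _ (by norm_num)
  have h2top : ((2:ℝ≥0∞) ^ T) ≠ ⊤ := ENNReal.pow_ne_top (by norm_num)
  rw [ENNReal.le_div_iff_mul_le (Or.inl h2ne) (Or.inl h2top)]
  have e1 : ENNReal.ofReal (1 - δ) * (2:ℝ≥0∞) ^ T = ENNReal.ofReal ((1 - δ) * 2 ^ T) := by
    rw [ENNReal.ofReal_mul (by linarith), ENNReal.ofReal_pow (by norm_num : (0:ℝ) ≤ 2)]
    norm_num
  rw [e1]
  calc ENNReal.ofReal ((1 - δ) * 2 ^ T) ≤ ENNReal.ofReal (goodF.card : ℝ) :=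
        ENNReal.ofReal_le_ofReal hgoodcard
    _ = (goodF.card : ℝ≥0∞) := ENNReal.ofReal_natCast _
end

section
/- There exists an absolute constant c > 0 such that for every d ∈ ℕ with d ≥ 11, every n ∈ ℕ₊, and all G, V > 0, there exist: a domain Z, a parameter class Θ ⊆ ℝ^d, a family of loss functions ℓ_z : Θ → ℝ for z ∈ Z that are each convex and G-Lipschitz with respect to the Euclidean norm, and a probability distribution μ over probability distributions ρ on Z (with ℓ_ρ(θ) := E_{z∼ρ} ℓ_z(θ) and Θ*_ρ := argmin_{θ∈Θ} ℓ_ρ(θ)), such that: (i) min_{φ∈Θ} E_{ρ∼μ} ‖φ − Proj_{Θ*_ρ}(φ)‖ ≤ V, and (ii) for every (measurable) algorithm Alg : Z^n → Θ, the excess risk E_{ρ∼μ} E_{S∼ρ^n} [ℓ_ρ(Alg(S)) − min_{θ∈Θ} ℓ_ρ(θ)] ≥ c · G · V · min{1/√n, 1/√d}. -/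
/-!
STATEMENT 19: Information-theoretic lower bound showing tightness of the
`O(GV/√n)` convex meta-learning upper bounds: there is a meta-learning
instance with convex `G`-Lipschitz losses and average parameter variation at
most `V` on which every algorithm incurs excess risk
`Ω(G V min{1/√n, 1/√d})`.
-/

open MeasureTheory

namespace MetaLB

noncomputable def ber (p : ℝ) : Measure Bool :=
  ENNReal.ofReal p • Measure.dirac true + ENNReal.ofReal (1-p) • Measure.dirac false

lemma ber_singleton {p : ℝ} (h0 : 0 ≤ p) (h1 : p ≤ 1) (z : Bool) :
    ((ber p) {z}).toReal = cond z p (1-p) := by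
  cases z <;>
  · simp [ber, Measure.dirac_apply, ENNReal.toReal_add, ENNReal.toReal_ofReal, h0,
      sub_nonneg.2 h1, Set.indicator]

lemma ber_prob {p : ℝ} (h0 : 0 ≤ p) (h1 : p ≤ 1) : IsProbabilityMeasure (ber p) := by
  constructor
  simp [ber, Measure.dirac_apply, ← ENNReal.ofReal_add, h0, sub_nonneg.2 h1]

lemma integral_ber {p : ℝ} (h0 : 0 ≤ p) (h1 : p ≤ 1) (f : Bool → ℝ) :
    ∫ z, f z ∂(ber p) = p * f true + (1-p) * f false := by
  have := ber_prob h0 h1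
  rw [integral_fintype (Integrable.of_finite)]
  simp [Fintype.sum_bool, Measure.real, ber_singleton h0 h1, smul_eq_mul]

lemma integral_pi_ber {n : ℕ} {p : ℝ} (h0 : 0 ≤ p) (h1 : p ≤ 1)
    (f : (Fin n → Bool) → ℝ) :
    ∫ S, f S ∂(Measure.pi fun _ : Fin n => ber p)
      = ∑ S : Fin n → Bool, (∏ i, cond (S i) p (1-p)) * f S := by
  have := ber_prob h0 h1
  rw [integral_fintype (Integrable.of_finite)]
  refine Finset.sum_congr rfl fun S _ => ?_
  have h1' : ({S} : Set (Fin n → Bool)) = Set.univ.pi fun i => {S i} :=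
    (Set.univ_pi_singleton S).symm
  rw [smul_eq_mul, Measure.real, h1', Measure.pi_pi, ENNReal.toReal_prod]
  congr 1
  exact Finset.prod_congr rfl fun i _ => ber_singleton h0 h1 (S i)

lemma sum_prod_bool (n : ℕ) (g : Bool → ℝ) :
    ∑ S : Fin n → Bool, ∏ i, g (S i) = (g true + g false) ^ n := by
  classical
  have := Finset.prod_univ_sum (fun _ : Fin n => (Finset.univ : Finset Bool))
    (fun _ z => g z)
  rw [Fintype.piFinset_univ] at this
  rw [← this]
  simp [Fintype.sum_bool, add_comm (g false)]

lemma l1_bound (n : ℕ) (ε : ℝ) (hε0 : 0 ≤ ε) (hε : ε ≤ 1/4) :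
    ∑ S : Fin n → Bool,
      |(∏ i, cond (S i) (1/2+ε) (1/2-ε)) - ∏ i, cond (S i) (1/2-ε) (1/2+ε)|
      ≤ 4 * ε * Real.sqrt n := by
  classical
  set p : ℝ := 1/2 + ε with hp
  set q : ℝ := 1/2 - ε with hq
  have hp0 : 0 ≤ p := by rw [hp]; linarith
  have hq0 : 0 ≤ q := by rw [hq]; linarith
  set w : Bool → ℝ := fun z => cond z p q with hw
  have hw0 : ∀ z, 0 ≤ w z := by intro z; cases z <;> simpa [hw]
  set a : (Fin n → Bool) → ℝ := fun S => ∏ i, Real.sqrt (w (S i)) with ha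
  set b : (Fin n → Bool) → ℝ := fun S => ∏ i, Real.sqrt (w (!(S i))) with hb
  have ha0 : ∀ S, 0 ≤ a S := fun S => Finset.prod_nonneg fun i _ => Real.sqrt_nonneg _
  have hb0 : ∀ S, 0 ≤ b S := fun S => Finset.prod_nonneg fun i _ => Real.sqrt_nonneg _
  have hasq : ∀ S, a S ^ 2 = ∏ i, w (S i) := by
    intro S
    rw [ha, ← Finset.prod_pow]
    exact Finset.prod_congr rfl fun i _ => Real.sq_sqrt (hw0 _)
  have hbsq : ∀ S, b S ^ 2 = ∏ i, w (!(S i)) := by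
    intro S
    rw [hb, ← Finset.prod_pow]
    exact Finset.prod_congr rfl fun i _ => Real.sq_sqrt (hw0 _)
  have hsa : ∑ S : Fin n → Bool, a S ^ 2 = 1 := by
    simp only [hasq]; rw [sum_prod_bool n w]; norm_num [hw, hp, hq]
  have hsb : ∑ S : Fin n → Bool, b S ^ 2 = 1 := by
    simp only [hbsq]
    rw [sum_prod_bool n (fun z => w (!z))]
    norm_num [hw, hp, hq]
  set B : ℝ := (2 * (Real.sqrt p * Real.sqrt q)) ^ n with hB
  have hB0 : 0 ≤ B := by
    apply pow_nonneg; positivity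
  have hsab : ∑ S : Fin n → Bool, a S * b S = B := by
    have : ∀ S : Fin n → Bool, a S * b S
        = ∏ i, (fun z => Real.sqrt (w z) * Real.sqrt (w (!z))) (S i) := by
      intro S; rw [ha, hb, ← Finset.prod_mul_distrib]
    simp only [this]
    rw [sum_prod_bool n (fun z => Real.sqrt (w z) * Real.sqrt (w (!z)))]
    simp only [hw]
    norm_num [hB]
    ring_nf
  have hBsq : 1 - 4 * (n : ℝ) * ε ^ 2 ≤ B ^ 2 := by
    have h4pq : (2 * (Real.sqrt p * Real.sqrt q)) ^ 2 = 1 - 4 * ε ^ 2 := by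
      rw [mul_pow, mul_pow, Real.sq_sqrt hp0, Real.sq_sqrt hq0]
      rw [hp, hq]; ring
    have hBsq' : B ^ 2 = (1 - 4 * ε ^ 2) ^ n := by
      rw [hB, ← pow_mul, mul_comm n 2, pow_mul, h4pq]
    rw [hBsq']
    have := one_add_mul_le_pow (a := -(4 * ε ^ 2)) (by nlinarith) n
    have h : (1 + -(4 * ε ^ 2)) = 1 - 4 * ε^2 := by ring
    rw [h] at this
    nlinarith [this]
  have key : ∑ S : Fin n → Bool, |a S ^ 2 - b S ^ 2| ≤ 4 * ε * Real.sqrt n := by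
    have habs : ∀ S : Fin n → Bool, |a S ^ 2 - b S ^ 2| = |a S - b S| * (a S + b S) := by
      intro S
      rw [show a S ^2 - b S ^2 = (a S - b S) * (a S + b S) by ring, abs_mul,
        abs_of_nonneg (by positivity : (0:ℝ) ≤ a S + b S)]
    simp only [habs]
    have hcs := Finset.sum_mul_sq_le_sq_mul_sq Finset.univ
      (fun S : Fin n → Bool => |a S - b S|) (fun S => a S + b S)
    have hf2 : ∑ S : Fin n → Bool, |a S - b S| ^ 2 = 2 - 2 * B := by
      have : ∀ S : Fin n → Bool, |a S - b S| ^ 2 = a S ^2 + b S ^2 - 2 * (a S * b S) := by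
        intro S; rw [sq_abs]; ring
      simp only [this]
      rw [Finset.sum_sub_distrib, Finset.sum_add_distrib, hsa, hsb, ← Finset.mul_sum, hsab]
      ring
    have hg2 : ∑ S : Fin n → Bool, (a S + b S) ^ 2 = 2 + 2 * B := by
      have : ∀ S : Fin n → Bool, (a S + b S) ^ 2 = a S ^2 + b S ^2 + 2 * (a S * b S) := by
        intro S; ring
      simp only [this]
      rw [Finset.sum_add_distrib, Finset.sum_add_distrib, hsa, hsb, ← Finset.mul_sum, hsab]
      ring
    rw [hf2, hg2] at hcs
    have hsum0 : 0 ≤ ∑ S : Fin n → Bool, |a S - b S| * (a S + b S) :=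
      Finset.sum_nonneg fun S _ => mul_nonneg (abs_nonneg _) (by positivity)
    have hrhs0 : 0 ≤ 4 * ε * Real.sqrt n := by positivity
    have hsq : (∑ S : Fin n → Bool, |a S - b S| * (a S + b S)) ^ 2
        ≤ (4 * ε * Real.sqrt n) ^ 2 := by
      have h1 : (2 - 2*B) * (2 + 2*B) = 4 - 4 * B^2 := by ring
      have h2 : (4 * ε * Real.sqrt n) ^ 2 = 16 * ε^2 * n := by
        rw [mul_pow, mul_pow, Real.sq_sqrt (Nat.cast_nonneg n)]; ring
      nlinarith [hcs, hBsq]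
    calc ∑ S : Fin n → Bool, |a S - b S| * (a S + b S)
        = Real.sqrt ((∑ S : Fin n → Bool, |a S - b S| * (a S + b S)) ^ 2) :=
          (Real.sqrt_sq hsum0).symm
      _ ≤ Real.sqrt ((4 * ε * Real.sqrt n) ^ 2) := Real.sqrt_le_sqrt hsq
      _ = 4 * ε * Real.sqrt n := Real.sqrt_sq hrhs0
  refine le_trans (le_of_eq ?_) key
  refine Finset.sum_congr rfl fun S _ => ?_
  rw [hasq, hbsq]
  congr 2
  refine Finset.prod_congr rfl fun i _ => ?_
  cases S i <;> simp [hw]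

lemma abs_coord_le {d : ℕ} (θ : EuclideanSpace ℝ (Fin d)) (i : Fin d) :
    |θ i| ≤ ‖θ‖ := by
  rw [EuclideanSpace.norm_eq]
  have h1 : |θ i| = Real.sqrt (‖θ i‖ ^ 2) := by
    rw [Real.sqrt_sq_eq_abs]; simp [Real.norm_eq_abs]
  rw [h1]
  apply Real.sqrt_le_sqrt
  exact Finset.single_le_sum (f := fun j => ‖θ j‖ ^ 2)
    (fun j _ => by positivity) (Finset.mem_univ i)

lemma sInf_linear_image {d : ℕ} (i0 : Fin d) (r V : ℝ) (hV : 0 ≤ V) :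
    sInf ((fun θ : EuclideanSpace ℝ (Fin d) => r * θ i0) ''
      Metric.closedBall 0 V) = -(|r| * V) := by
  apply IsLeast.csInf_eq
  constructor
  · refine ⟨EuclideanSpace.single i0 (if 0 ≤ r then -V else V), ?_, ?_⟩
    · rw [Metric.mem_closedBall, dist_zero_right, EuclideanSpace.norm_single]
      split_ifs <;> simp [abs_of_nonneg hV]
    · have hval : (EuclideanSpace.single i0 (if 0 ≤ r then -V else V) :
          EuclideanSpace ℝ (Fin d)) i0 = if 0 ≤ r then -V else V := by
        simp [EuclideanSpace.single_apply]
      show r * _ = _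
      rw [hval]
      split_ifs with h
      · rw [abs_of_nonneg h]; ring
      · rw [abs_of_neg (not_le.1 h)]; ring
  · rintro y ⟨θ, hθ, rfl⟩
    have h1 : |θ i0| ≤ V := by
      refine (abs_coord_le θ i0).trans ?_
      rwa [Metric.mem_closedBall, dist_zero_right] at hθ
    have h2 : |r * θ i0| ≤ |r| * V := by
      rw [abs_mul]
      exact mul_le_mul_of_nonneg_left h1 (abs_nonneg r)
    have h3 := neg_abs_le (r * θ i0)
    show -(|r| * V) ≤ r * θ i0
    linarith

instance : MeasurableSingletonClass (Measure Bool) := by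
  constructor
  intro ρ₀
  have : {ρ₀} = ⋂ s : Set Bool, {ρ : Measure Bool | ρ s = ρ₀ s} := by
    ext ρ
    simp only [Set.mem_singleton_iff, Set.mem_iInter, Set.mem_setOf_eq]
    constructor
    · rintro rfl s; rfl
    · intro h
      exact Measure.ext fun s _ => h s
  rw [this]
  exact MeasurableSet.iInter fun s =>
    (Measure.measurable_coe (by measurability)) (measurableSet_singleton (ρ₀ s))

end MetaLB

open MetaLB

theorem convex_meta_learning_GV_lower_bound :
    ∃ c : ℝ, 0 < c ∧
      ∀ (d n : ℕ), 11 ≤ d → 1 ≤ n → ∀ G V : ℝ, 0 < G → 0 < V →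
        ∃ (Z : Type) (_ : MeasurableSpace Z)
          (Θ : Set (EuclideanSpace ℝ (Fin d)))
          (ℓ : Z → EuclideanSpace ℝ (Fin d) → ℝ)
          (μ : Measure (Measure Z)),
          IsProbabilityMeasure μ ∧
          (∀ᵐ ρ ∂μ, IsProbabilityMeasure ρ) ∧
          (∀ z : Z, ConvexOn ℝ Θ (ℓ z)) ∧
          (∀ z : Z, LipschitzOnWith (Real.toNNReal G) (ℓ z) Θ) ∧
          (∃ φ ∈ Θ,
            (∫ ρ, Metric.infDist φ
                {θ | θ ∈ Θ ∧ IsMinOn (fun θ' => ∫ z, ℓ z θ' ∂ρ) Θ θ} ∂μ) ≤ V) ∧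
          (∀ Alg : (Fin n → Z) → EuclideanSpace ℝ (Fin d),
            Measurable Alg → (∀ S, Alg S ∈ Θ) →
            c * G * V * min (1 / Real.sqrt (n : ℝ)) (1 / Real.sqrt (d : ℝ)) ≤
              ∫ ρ, (∫ S, ((∫ z, ℓ z (Alg S) ∂ρ) -
                  sInf ((fun θ => ∫ z, ℓ z θ ∂ρ) '' Θ))
                ∂(Measure.pi fun _ : Fin n => ρ)) ∂μ) := by
  refine ⟨1/4, by norm_num, ?_⟩
  intro d n hd hn G V hG hV
  have hsn : 1 ≤ Real.sqrt n := by
    rw [show (1:ℝ) = Real.sqrt 1 from (Real.sqrt_one).symm]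
    exact Real.sqrt_le_sqrt (by exact_mod_cast hn)
  have hsd : 1 ≤ Real.sqrt d := by
    rw [show (1:ℝ) = Real.sqrt 1 from (Real.sqrt_one).symm]
    exact Real.sqrt_le_sqrt (by exact_mod_cast (by omega : 1 ≤ d))
  have hsn0 : 0 < Real.sqrt n := lt_of_lt_of_le one_pos hsn
  have hsd0 : 0 < Real.sqrt d := lt_of_lt_of_le one_pos hsd
  set ε : ℝ := min (1 / Real.sqrt n) (1 / Real.sqrt d) / 4 with hεd
  have hε0 : 0 < ε := by
    rw [hεd]
    have : 0 < min (1 / Real.sqrt n) (1 / Real.sqrt d) :=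
      lt_min (by positivity) (by positivity)
    linarith
  have hε14 : ε ≤ 1/4 := by
    rw [hεd]
    have h1 : min (1 / Real.sqrt n) (1 / Real.sqrt d) ≤ 1 / Real.sqrt n := min_le_left _ _
    have h2 : 1 / Real.sqrt n ≤ 1 := by
      rw [div_le_one hsn0]; exact hsn
    linarith
  have hε4n : 4 * ε * Real.sqrt n ≤ 1 := by
    have h1 : ε ≤ (1 / Real.sqrt n) / 4 := by
      rw [hεd]; gcongr; exact min_le_left _ _
    have h2 : 4 * ε * Real.sqrt n ≤ 4 * ((1 / Real.sqrt n) / 4) * Real.sqrt n := by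
      have := mul_le_mul_of_nonneg_right
        (mul_le_mul_of_nonneg_left h1 (by norm_num : (0:ℝ) ≤ 4)) hsn0.le
      linarith
    have h3 : 4 * ((1 / Real.sqrt n) / 4) * Real.sqrt n = 1 := by
      field_simp
    linarith
  have hpp0 : (0:ℝ) ≤ 1/2 + ε := by linarith
  have hpp1 : (1:ℝ)/2 + ε ≤ 1 := by linarith
  have hqq0 : (0:ℝ) ≤ 1/2 - ε := by linarith
  have hqq1 : (1:ℝ)/2 - ε ≤ 1 := by linarith
  have e1 : (1:ℝ) - (1/2 + ε) = 1/2 - ε := by ring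
  have e2 : (1:ℝ) - (1/2 - ε) = 1/2 + ε := by ring
  set i0 : Fin d := ⟨0, by omega⟩ with hi0
  set Θ : Set (EuclideanSpace ℝ (Fin d)) := Metric.closedBall 0 V with hΘ
  set ℓ : Bool → EuclideanSpace ℝ (Fin d) → ℝ := fun z θ => (cond z G (-G)) * θ i0 with hℓ
  set ρP : Measure Bool := ber (1/2 + ε) with hρP
  set ρQ : Measure Bool := ber (1/2 - ε) with hρQ
  haveI hPprob : IsProbabilityMeasure ρP := ber_prob hpp0 hpp1
  haveI hQprob : IsProbabilityMeasure ρQ := ber_prob hqq0 hqq1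
  set μ : Measure (Measure Bool) :=
    (1/2 : ENNReal) • Measure.dirac ρP + (1/2 : ENNReal) • Measure.dirac ρQ with hμ
  haveI hμprob : IsProbabilityMeasure μ := by
    constructor
    rw [hμ, Measure.add_apply, Measure.smul_apply, Measure.smul_apply,
      measure_univ, measure_univ]
    simp only [smul_eq_mul, mul_one]
    rw [ENNReal.add_halves]
  refine ⟨Bool, inferInstance, Θ, ℓ, μ, hμprob, ?_, ?_, ?_, ?_, ?_⟩
  · -- a.e. probability
    have hmeasset : MeasurableSet {ρ : Measure Bool | ρ Set.univ = 1} :=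
      (Measure.measurable_coe MeasurableSet.univ) (measurableSet_singleton 1)
    have hP1 : ρP ∈ {ρ : Measure Bool | ρ Set.univ = 1} := measure_univ
    have hQ1 : ρQ ∈ {ρ : Measure Bool | ρ Set.univ = 1} := measure_univ
    have h0 : μ {ρ : Measure Bool | ρ Set.univ = 1}ᶜ = 0 := by
      rw [hμ, Measure.add_apply, Measure.smul_apply, Measure.smul_apply,
        Measure.dirac_apply' _ hmeasset.compl, Measure.dirac_apply' _ hmeasset.compl]
      rw [Set.indicator_of_notMem (by simpa using hP1),
        Set.indicator_of_notMem (by simpa using hQ1)]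
      simp
    have hae : ∀ᵐ ρ ∂μ, ρ Set.univ = 1 := by
      rw [MeasureTheory.ae_iff]
      convert h0 using 2
      rfl
    filter_upwards [hae] with ρ hρ
    exact ⟨hρ⟩
  · -- convexity
    intro z
    refine ⟨convex_closedBall 0 V, ?_⟩
    intro x _ y _ a b ha hb hab
    have hcoord : (a • x + b • y) i0 = a * x i0 + b * y i0 := by
      simp [PiLp.add_apply, PiLp.smul_apply, smul_eq_mul]
    apply le_of_eq
    rw [hℓ]
    simp only [smul_eq_mul]
    rw [hcoord]
    ring
  · -- Lipschitz
    intro z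
    apply LipschitzOnWith.of_dist_le_mul
    intro x _ y _
    have hcoe : ((Real.toNNReal G : NNReal) : ℝ) = G := Real.coe_toNNReal G hG.le
    rw [hcoe, hℓ]
    simp only []
    rw [Real.dist_eq, show (cond z G (-G)) * x i0 - (cond z G (-G)) * y i0
      = (cond z G (-G)) * (x i0 - y i0) from by ring, abs_mul,
      show |cond z G (-G)| = G from by cases z <;> simp [abs_of_pos hG]]
    have h3 : |x i0 - y i0| ≤ dist x y := by
      rw [dist_eq_norm]
      have := abs_coord_le (x - y) i0
      simpa [PiLp.sub_apply] using this
    exact mul_le_mul_of_nonneg_left h3 hG.le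
  · -- average variation
    refine ⟨0, Metric.mem_closedBall_self hV.le, ?_⟩
    have hbd : ∀ ρ : Measure Bool, Metric.infDist (0 : EuclideanSpace ℝ (Fin d))
        {θ | θ ∈ Θ ∧ IsMinOn (fun θ' => ∫ z, ℓ z θ' ∂ρ) Θ θ} ≤ V := by
      intro ρ
      by_cases hS : ({θ | θ ∈ Θ ∧ IsMinOn (fun θ' => ∫ z, ℓ z θ' ∂ρ) Θ θ} :
          Set (EuclideanSpace ℝ (Fin d))).Nonempty
      · obtain ⟨y, hy⟩ := hS
        refine (Metric.infDist_le_dist_of_mem hy).trans ?_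
        have := hy.1
        rw [hΘ, Metric.mem_closedBall] at this
        rwa [dist_comm]
      · rw [Set.not_nonempty_iff_eq_empty.1 hS, Metric.infDist_empty]
        exact hV.le
    calc (∫ ρ, Metric.infDist (0 : EuclideanSpace ℝ (Fin d))
          {θ | θ ∈ Θ ∧ IsMinOn (fun θ' => ∫ z, ℓ z θ' ∂ρ) Θ θ} ∂μ)
        ≤ ∫ _, V ∂μ := by
          apply integral_mono_of_nonneg
          · exact Filter.Eventually.of_forall fun ρ => Metric.infDist_nonneg
          · exact integrable_const V
          · exact Filter.Eventually.of_forall hbd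
      _ = V := by rw [integral_const]; simp [measure_univ]
  · -- main lower bound
    intro Alg _ hAlgMem
    set A : (Fin n → Bool) → ℝ := fun S => Alg S i0 with hA
    have hAbd : ∀ S, |A S| ≤ V := by
      intro S
      refine (abs_coord_le (Alg S) i0).trans ?_
      have := hAlgMem S
      rwa [hΘ, Metric.mem_closedBall, dist_zero_right] at this
    -- risk formulas
    have hriskP : ∀ θ : EuclideanSpace ℝ (Fin d),
        (∫ z, ℓ z θ ∂ρP) = (2*ε*G) * θ i0 := by
      intro θ
      rw [hρP, integral_ber hpp0 hpp1 (fun z => ℓ z θ), hℓ]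
      simp only [cond]
      ring
    have hriskQ : ∀ θ : EuclideanSpace ℝ (Fin d),
        (∫ z, ℓ z θ ∂ρQ) = (-(2*ε*G)) * θ i0 := by
      intro θ
      rw [hρQ, integral_ber hqq0 hqq1 (fun z => ℓ z θ), hℓ]
      simp only [cond]
      ring
    have hsInfP : sInf ((fun θ => ∫ z, ℓ z θ ∂ρP) '' Θ) = -(2*ε*G*V) := by
      rw [show (fun θ : EuclideanSpace ℝ (Fin d) => ∫ z, ℓ z θ ∂ρP)
        = fun θ => (2*ε*G) * θ i0 from funext hriskP, hΘ,
        sInf_linear_image i0 (2*ε*G) V hV.le,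
        abs_of_nonneg (by positivity : (0:ℝ) ≤ 2*ε*G)]
    have hsInfQ : sInf ((fun θ => ∫ z, ℓ z θ ∂ρQ) '' Θ) = -(2*ε*G*V) := by
      rw [show (fun θ : EuclideanSpace ℝ (Fin d) => ∫ z, ℓ z θ ∂ρQ)
        = fun θ => (-(2*ε*G)) * θ i0 from funext hriskQ, hΘ,
        sInf_linear_image i0 (-(2*ε*G)) V hV.le, abs_neg,
        abs_of_nonneg (by positivity : (0:ℝ) ≤ 2*ε*G)]
    -- inner integrals
    have hinnerP : (∫ S, ((∫ z, ℓ z (Alg S) ∂ρP) -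
          sInf ((fun θ => ∫ z, ℓ z θ ∂ρP) '' Θ))
          ∂(Measure.pi fun _ : Fin n => ρP))
        = ∑ S : Fin n → Bool, (∏ i, cond (S i) (1/2+ε) (1/2-ε)) *
            ((2*ε*G) * A S + 2*ε*G*V) := by
      simp only [hsInfP]
      simp only [hriskP, sub_neg_eq_add]
      rw [hρP, integral_pi_ber hpp0 hpp1]
      simp only [e1, hA]
    have hinnerQ : (∫ S, ((∫ z, ℓ z (Alg S) ∂ρQ) -
          sInf ((fun θ => ∫ z, ℓ z θ ∂ρQ) '' Θ))
          ∂(Measure.pi fun _ : Fin n => ρQ))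
        = ∑ S : Fin n → Bool, (∏ i, cond (S i) (1/2-ε) (1/2+ε)) *
            ((-(2*ε*G)) * A S + 2*ε*G*V) := by
      simp only [hsInfQ]
      simp only [hriskQ, sub_neg_eq_add]
      rw [hρQ, integral_pi_ber hqq0 hqq1]
      simp only [e2, hA]
    -- outer integral
    set g : Measure Bool → ℝ := fun ρ => ∫ S, ((∫ z, ℓ z (Alg S) ∂ρ) -
        sInf ((fun θ => ∫ z, ℓ z θ ∂ρ) '' Θ)) ∂(Measure.pi fun _ : Fin n => ρ) with hg
    have houter : (∫ ρ, g ρ ∂μ) = (1/2) * g ρP + (1/2) * g ρQ := by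
      have hi1 : Integrable g ((1/2 : ENNReal) • Measure.dirac ρP) :=
        Integrable.smul_measure
          ((integrable_const (g ρP)).congr (ae_eq_dirac g).symm)
          (by norm_num)
      have hi2 : Integrable g ((1/2 : ENNReal) • Measure.dirac ρQ) :=
        Integrable.smul_measure
          ((integrable_const (g ρQ)).congr (ae_eq_dirac g).symm)
          (by norm_num)
      rw [hμ, integral_add_measure hi1 hi2, integral_smul_measure,
        integral_smul_measure, integral_dirac, integral_dirac]
      norm_num [smul_eq_mul]
    -- finite sum estimate
    have hsumP : ∑ S : Fin n → Bool, (∏ i, cond (S i) (1/2+ε) (1/2-ε)) = 1 := by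
      have := sum_prod_bool n (fun z => cond z (1/2+ε) (1/2-ε))
      simp only [cond] at this ⊢
      rw [this]
      norm_num
    have hsumQ : ∑ S : Fin n → Bool, (∏ i, cond (S i) (1/2-ε) (1/2+ε)) = 1 := by
      have := sum_prod_bool n (fun z => cond z (1/2-ε) (1/2+ε))
      simp only [cond] at this ⊢
      rw [this]
      norm_num
    have hl1 := l1_bound n ε hε0.le hε14
    set PS : (Fin n → Bool) → ℝ := fun S => ∏ i, cond (S i) (1/2+ε) (1/2-ε) with hPS
    set QS : (Fin n → Bool) → ℝ := fun S => ∏ i, cond (S i) (1/2-ε) (1/2+ε) with hQS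
    have hx : -V ≤ ∑ S : Fin n → Bool, (PS S - QS S) * A S := by
      have habs : |∑ S : Fin n → Bool, (PS S - QS S) * A S| ≤ V := by
        calc |∑ S : Fin n → Bool, (PS S - QS S) * A S|
            ≤ ∑ S : Fin n → Bool, |(PS S - QS S) * A S| :=
              Finset.abs_sum_le_sum_abs _ _
          _ = ∑ S : Fin n → Bool, |PS S - QS S| * |A S| := by
              simp [abs_mul]
          _ ≤ ∑ S : Fin n → Bool, |PS S - QS S| * V :=
              Finset.sum_le_sum fun S _ =>
                mul_le_mul_of_nonneg_left (hAbd S) (abs_nonneg _)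
          _ = (∑ S : Fin n → Bool, |PS S - QS S|) * V := by
              rw [Finset.sum_mul]
          _ ≤ (4 * ε * Real.sqrt n) * V :=
              mul_le_mul_of_nonneg_right hl1 hV.le
          _ ≤ 1 * V := mul_le_mul_of_nonneg_right hε4n hV.le
          _ = V := one_mul V
      have := neg_abs_le (∑ S : Fin n → Bool, (PS S - QS S) * A S)
      linarith
    have hexpand : (1/2) * (∑ S : Fin n → Bool, PS S * ((2*ε*G) * A S + 2*ε*G*V))
        + (1/2) * (∑ S : Fin n → Bool, QS S * ((-(2*ε*G)) * A S + 2*ε*G*V))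
        = ε*G*(∑ S : Fin n → Bool, (PS S - QS S) * A S)
          + ε*G*V*(∑ S : Fin n → Bool, PS S)
          + ε*G*V*(∑ S : Fin n → Bool, QS S) := by
      rw [Finset.mul_sum, Finset.mul_sum, Finset.mul_sum, Finset.mul_sum, Finset.mul_sum,
        ← Finset.sum_add_distrib, ← Finset.sum_add_distrib, ← Finset.sum_add_distrib]
      exact Finset.sum_congr rfl fun S _ => by ring
    have hfinal : ε*G*V ≤ (1/2) * g ρP + (1/2) * g ρQ := by
      rw [hg]
      simp only []
      rw [hinnerP, hinnerQ]
      rw [← hPS, ← hQS] at *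
      rw [hexpand, hsumP, hsumQ]
      have hmul := mul_le_mul_of_nonneg_left hx (by positivity : (0:ℝ) ≤ ε*G)
      nlinarith [hmul, hε0, hG, hV]
    have heq : 1/4 * G * V * min (1 / Real.sqrt n) (1 / Real.sqrt d) = ε*G*V := by
      rw [hεd]; ring
    calc (1:ℝ)/4 * G * V * min (1 / Real.sqrt n) (1 / Real.sqrt d)
        = ε*G*V := heq
      _ ≤ (1/2) * g ρP + (1/2) * g ρQ := hfinal
      _ = ∫ ρ, g ρ ∂μ := houter.symm
end
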